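/- arXiv:2103.10523 — 3 statements merged into one kernel-verified Lean document; each statement's English description precedes it below -/
import Mathlib

section
/- Let G be a finite connected simple graph with m ≥ 2 vertices and n edges, let S be a vertex of G, and let T be a spanning tree of G. Then the absolute value of the determinant of the edgewise Kirchhoff matrix M_{G,S,T} equals the number of spanning trees of G: |det M_{G,S,T}| = t(G). -/
open SimpleGraph

/-- The edges of `G`, each oriented from its smaller endpoint to its larger endpoint. -/
abbrev OrientedEdge {V : Type*} [LinearOrder V] (G : SimpleGraph V) : Type _ :=
  {e : V × V // e.1 < e.2 ∧ G.Adj e.1 e.2}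

/-- Row indices of the edgewise Kirchhoff matrix: the vertices `w ≠ S` together with
the (oriented) edges of `G` not belonging to `T`. -/
abbrev KirchhoffRow {V : Type*} [LinearOrder V] (G T : SimpleGraph V) (S : V) : Type _ :=
  {w : V // w ≠ S} ⊕ {e : OrientedEdge G // ¬ T.Adj e.1.1 e.1.2}

/-- `M` is the edgewise Kirchhoff matrix of `G` with respect to the pole `S` and the
spanning tree `T`:  the row of a vertex `w ≠ S` has entry `+1` in the column of each
edge oriented into `w`, `-1` in the column of each edge oriented out of `w`, and `0`
elsewhere; the row of an edge `f ∉ T` oriented `u → v` has entry `+1` in the column of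
`f`, entry `+1` (resp. `-1`) in the column of every edge of `T` traversed forwards
(resp. backwards) by the unique path in `T` from `v` to `u`, and `0` elsewhere. -/
def IsEdgewiseKirchhoffMatrix {V : Type*} [LinearOrder V] (G T : SimpleGraph V) (S : V)
    (M : Matrix (KirchhoffRow G T S) (OrientedEdge G) ℚ) : Prop :=
  (∀ (w : {w : V // w ≠ S}) (g : OrientedEdge G),
      M (Sum.inl w) g =
        if g.1.2 = w.1 then 1 else if g.1.1 = w.1 then -1 else 0) ∧
  (∀ (f : {e : OrientedEdge G // ¬ T.Adj e.1.1 e.1.2}) (g : OrientedEdge G)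
      (P : T.Walk f.1.1.2 f.1.1.1), P.IsPath →
      M (Sum.inr f) g =
        if g = f.1 then 1
        else if (g.1.1, g.1.2) ∈ P.darts.map SimpleGraph.Dart.toProd then 1
        else if (g.1.2, g.1.1) ∈ P.darts.map SimpleGraph.Dart.toProd then -1
        else 0)

namespace EKaux
set_option linter.unusedSectionVars false
variable {V : Type*} [Fintype V] [LinearOrder V]



/-- signed indicator of an oriented edge along a walk -/
def wsgn {G F : SimpleGraph V} {a b : V} (P : F.Walk a b) (g : OrientedEdge G) : ℤ :=
  if (g.1.1, g.1.2) ∈ P.darts.map SimpleGraph.Dart.toProd then 1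
  else if (g.1.2, g.1.1) ∈ P.darts.map SimpleGraph.Dart.toProd then -1
  else 0

/-- vertex-edge incidence sign -/
def vinc {G : SimpleGraph V} (w : V) (g : OrientedEdge G) : ℤ :=
  if g.1.2 = w then 1 else if g.1.1 = w then -1 else 0

lemma wsgn_eq_zero_of_not_mem_edges {G F : SimpleGraph V} {a b : V} {P : F.Walk a b}
    {g : OrientedEdge G} (h : s(g.1.1, g.1.2) ∉ P.edges) : wsgn P g = 0 := by
  rw [wsgn, if_neg, if_neg]
  · intro hmem
    obtain ⟨d, hd, hd2⟩ := List.mem_map.mp hmem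
    apply h
    refine List.mem_map.mpr ⟨d, hd, ?_⟩
    rw [SimpleGraph.Dart.edge, hd2]
    exact Sym2.eq_swap
  · intro hmem
    obtain ⟨d, hd, hd2⟩ := List.mem_map.mp hmem
    apply h
    refine List.mem_map.mpr ⟨d, hd, ?_⟩
    rw [SimpleGraph.Dart.edge, hd2]

lemma wsgn_eq_zero_of_not_adj {G F : SimpleGraph V} {a b : V} {P : F.Walk a b}
    {g : OrientedEdge G} (h : ¬ F.Adj g.1.1 g.1.2) : wsgn P g = 0 := by
  rw [wsgn, if_neg, if_neg]
  · intro hmem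
    obtain ⟨d, _, hd2⟩ := List.mem_map.mp hmem
    exact h (((congrArg Prod.fst hd2) ▸ (congrArg Prod.snd hd2) ▸ d.adj).symm)
  · intro hmem
    obtain ⟨d, _, hd2⟩ := List.mem_map.mp hmem
    exact h ((congrArg Prod.fst hd2) ▸ (congrArg Prod.snd hd2) ▸ d.adj)

lemma wsgn_ne_zero {G F : SimpleGraph V} {a b : V} {P : F.Walk a b} {g : OrientedEdge G}
    (h : (g.1.1, g.1.2) ∈ P.darts.map SimpleGraph.Dart.toProd ∨
      (g.1.2, g.1.1) ∈ P.darts.map SimpleGraph.Dart.toProd) : wsgn P g ≠ 0 := by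
  rw [wsgn]
  split_ifs with h1 h2
  · exact one_ne_zero
  · exact neg_ne_zero.mpr one_ne_zero
  · tauto

lemma key_sum {G F : SimpleGraph V} [DecidableRel G.Adj] (hF : F ≤ G) {a b : V}
    (P : F.Walk a b) (hP : P.edges.Nodup) (w : V) :
    ∑ g : OrientedEdge G, wsgn P g * vinc w g
      = (if b = w then 1 else 0) - (if a = w then 1 else 0) := by
  induction P with
  | nil => simp [wsgn]
  | @cons a c b h p ih =>
    rw [SimpleGraph.Walk.edges_cons, List.nodup_cons] at hP
    obtain ⟨hne, hnd⟩ := hP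
    have darts : (SimpleGraph.Walk.cons h p).darts.map SimpleGraph.Dart.toProd
        = (a, c) :: p.darts.map SimpleGraph.Dart.toProd := by
      rw [SimpleGraph.Walk.darts_cons, List.map_cons]
    have step : ∀ g₀ : OrientedEdge G,
        (∀ g : OrientedEdge G, wsgn (SimpleGraph.Walk.cons h p) g * vinc w g
          = wsgn p g * vinc w g
            + (if g = g₀ then ((if c = w then 1 else 0) - (if a = w then 1 else 0)) else 0)) →
        ∑ g : OrientedEdge G, wsgn (SimpleGraph.Walk.cons h p) g * vinc w g
          = (if b = w then 1 else 0) - (if a = w then 1 else 0) := by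
      intro g₀ hpt
      rw [Finset.sum_congr rfl (fun g _ => hpt g), Finset.sum_add_distrib,
        Finset.sum_ite_eq' Finset.univ g₀, if_pos (Finset.mem_univ _), ih hnd]
      ring
    rcases h.ne.lt_or_gt with hac | hca
    · refine step ⟨(a, c), hac, hF h⟩ ?_
      intro g
      by_cases hg : g = (⟨(a, c), hac, hF h⟩ : OrientedEdge G)
      · subst hg
        have h1 : wsgn (SimpleGraph.Walk.cons h p)
            (⟨(a, c), hac, hF h⟩ : OrientedEdge G) = 1 := by
          rw [wsgn, if_pos]
          rw [darts]
          exact List.mem_cons_self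
        have h2 : wsgn p (⟨(a, c), hac, hF h⟩ : OrientedEdge G) = 0 :=
          wsgn_eq_zero_of_not_mem_edges hne
        have hv : vinc w (⟨(a, c), hac, hF h⟩ : OrientedEdge G)
            = if c = w then 1 else if a = w then -1 else 0 := rfl
        rw [h1, h2, if_pos rfl, hv]
        split_ifs with h3 h4
        · exact absurd (h4.trans h3.symm) hac.ne
        · norm_num
        · norm_num
        · norm_num
      · have m1 : (g.1.1, g.1.2) ≠ (a, c) := by
          intro hx
          exact hg (Subtype.ext (Prod.ext (congrArg Prod.fst hx) (congrArg Prod.snd hx)))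
        have m2 : (g.1.2, g.1.1) ≠ (a, c) := by
          intro hx
          have h1 : g.1.2 = a := congrArg Prod.fst hx
          have h2 : g.1.1 = c := congrArg Prod.snd hx
          have := g.2.1
          rw [h1, h2] at this
          exact absurd hac (asymm this)
        rw [if_neg hg, add_zero, wsgn, wsgn, darts]
        simp only [List.mem_cons, m1, m2, false_or]
    · refine step ⟨(c, a), hca, hF h.symm⟩ ?_
      intro g
      by_cases hg : g = (⟨(c, a), hca, hF h.symm⟩ : OrientedEdge G)
      · subst hg
        have h1 : wsgn (SimpleGraph.Walk.cons h p)
            (⟨(c, a), hca, hF h.symm⟩ : OrientedEdge G) = -1 := by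
          rw [wsgn, if_neg, if_pos]
          · rw [darts]; exact List.mem_cons_self
          · rw [darts, List.mem_cons]
            rintro (hx | hx)
            · exact hca.ne (congrArg Prod.fst hx)
            · obtain ⟨d, hd, hd2⟩ := List.mem_map.mp hx
              apply hne
              refine List.mem_map.mpr ⟨d, hd, ?_⟩
              rw [SimpleGraph.Dart.edge, hd2]
              exact Sym2.eq_swap
        have h2 : wsgn p (⟨(c, a), hca, hF h.symm⟩ : OrientedEdge G) = 0 := by
          apply wsgn_eq_zero_of_not_mem_edges
          simpa [Sym2.eq_swap] using hne
        have hv : vinc w (⟨(c, a), hca, hF h.symm⟩ : OrientedEdge G)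
            = if a = w then 1 else if c = w then -1 else 0 := rfl
        rw [h1, h2, if_pos rfl, hv]
        split_ifs with h3 h4
        · exact absurd (h4.trans h3.symm) hca.ne
        · norm_num
        · norm_num
        · norm_num
      · have m1 : (g.1.1, g.1.2) ≠ (a, c) := by
          intro hx
          have h1 : g.1.1 = a := congrArg Prod.fst hx
          have h2 : g.1.2 = c := congrArg Prod.snd hx
          have := g.2.1
          rw [h1, h2] at this
          exact absurd hca (asymm this)
        have m2 : (g.1.2, g.1.1) ≠ (a, c) := by
          intro hx
          have h1 : g.1.2 = a := congrArg Prod.fst hx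
          have h2 : g.1.1 = c := congrArg Prod.snd hx
          exact hg (Subtype.ext (Prod.ext h2 h1))
        rw [if_neg hg, add_zero, wsgn, wsgn, darts]
        simp only [List.mem_cons, m1, m2, false_or]




def BincZ (G : SimpleGraph V) [DecidableRel G.Adj] (S : V) :
    Matrix {w : V // w ≠ S} (OrientedEdge G) ℤ :=
  fun w g => vinc w.1 g

noncomputable def pathTo {H : SimpleGraph V} (hH : H.IsTree) (a b : V) : H.Walk a b :=
  (hH.existsUnique_path a b).choose

lemma pathTo_isPath {H : SimpleGraph V} (hH : H.IsTree) (a b : V) :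
    (pathTo hH a b).IsPath :=
  (hH.existsUnique_path a b).choose_spec.1

omit [Fintype V] [LinearOrder V] in
lemma sum_extend {α : Type*} [Fintype α] {β : Type*} [Fintype β] [DecidableEq β]
    (φ : α → β) (hφ : Function.Injective φ) (F : β → ℤ)
    (h0 : ∀ g, g ∉ Set.range φ → F g = 0) :
    ∑ a, F (φ a) = ∑ b, F b := by
  have h1 : ∀ x ∈ Finset.univ, x ∉ Finset.univ.image φ → F x = 0 := by
    intro x _ hx
    apply h0
    rintro ⟨a, rfl⟩
    exact hx (Finset.mem_image_of_mem φ (Finset.mem_univ a))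
  rw [← Finset.sum_subset (Finset.subset_univ (Finset.univ.image φ)) h1,
    Finset.sum_image (fun x _ y _ h => hφ h)]

lemma sum_incZ {G : SimpleGraph V} {S : V} (y : V → ℤ) (hS : y S = 0) (g : OrientedEdge G) :
    ∑ w : {w : V // w ≠ S}, y w.1 * vinc w.1 g = y g.1.2 - y g.1.1 := by
  classical
  have h1 : ∑ w : {w : V // w ≠ S}, y w.1 * vinc w.1 g
      = ∑ u ∈ Finset.univ.erase S, y u * vinc u g := by
    have hmem : ∀ x : V, x ∈ Finset.univ.erase S ↔ x ≠ S := by intro x; simp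
    exact (Finset.sum_subtype (Finset.univ.erase S) hmem (fun u => y u * vinc u g)).symm
  rw [h1, Finset.sum_erase _ (by rw [hS, zero_mul])]
  have hne : g.1.1 ≠ g.1.2 := ne_of_lt g.2.1
  have key : ∀ u, y u * vinc u g
      = (if g.1.2 = u then y u else 0) - (if g.1.1 = u then y u else 0) := by
    intro u
    rw [vinc]
    split_ifs with h1 h2
    · exact absurd (h2.trans h1.symm) hne
    · ring
    · ring
    · ring
  rw [Finset.sum_congr rfl (fun u _ => key u), Finset.sum_sub_distrib,
    Finset.sum_ite_eq Finset.univ, Finset.sum_ite_eq Finset.univ,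
    if_pos (Finset.mem_univ _), if_pos (Finset.mem_univ _)]

lemma treedet {G H : SimpleGraph V} [DecidableRel G.Adj] (hHG : H ≤ G) (hH : H.IsTree) (S : V)
    (φ : {w : V // w ≠ S} → OrientedEdge G) (hφ : Function.Injective φ)
    (hrange : ∀ g : OrientedEdge G, H.Adj g.1.1 g.1.2 ↔ g ∈ Set.range φ) :
    ((BincZ G S).submatrix id φ).det = 1 ∨ ((BincZ G S).submatrix id φ).det = -1 := by
  classical
  set Q : Matrix {w : V // w ≠ S} {w : V // w ≠ S} ℤ :=
    fun w' w'' => wsgn (pathTo hH S w''.1) (φ w') with hQ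
  have entry : ∀ w w'' : {w : V // w ≠ S},
      (∑ w', (BincZ G S).submatrix id φ w w' * Q w' w'') = if w = w'' then 1 else 0 := by
    intro w w''
    have e1 : ∀ w', (BincZ G S).submatrix id φ w w' * Q w' w''
        = wsgn (pathTo hH S w''.1) (φ w') * vinc w.1 (φ w') := fun w' => mul_comm _ _
    have hS0 : (if S = (w.1 : V) then (1:ℤ) else 0) = 0 := if_neg (fun hS => w.2 hS.symm)
    rw [Finset.sum_congr rfl (fun w' _ => e1 w'),
      sum_extend φ hφ (fun g => wsgn (pathTo hH S w''.1) g * vinc w.1 g)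
        (fun g hg => by
          show wsgn (pathTo hH S w''.1) g * vinc w.1 g = 0
          rw [wsgn_eq_zero_of_not_adj (fun ha => hg ((hrange g).mp ha)), zero_mul]),
      key_sum hHG _ ((pathTo_isPath hH S w''.1).isTrail.edges_nodup) w.1, hS0, sub_zero]
    simp [Subtype.ext_iff, eq_comm]
  have hmul : (BincZ G S).submatrix id φ * Q = 1 := by
    ext w w''
    rw [Matrix.mul_apply, entry w w'', Matrix.one_apply]
  have hdet : ((BincZ G S).submatrix id φ).det * Q.det = 1 := by
    rw [← Matrix.det_mul, hmul, Matrix.det_one]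
  exact Int.eq_one_or_neg_one_of_mul_eq_one hdet

lemma zerodet {G H : SimpleGraph V} [DecidableRel G.Adj] (hHG : H ≤ G) (hnt : ¬ H.IsTree)
    (S : V)
    (φ : {w : V // w ≠ S} → OrientedEdge G) (hφ : Function.Injective φ)
    (hrange : ∀ g : OrientedEdge G, H.Adj g.1.1 g.1.2 ↔ g ∈ Set.range φ) :
    ((BincZ G S).submatrix id φ).det = 0 := by
  classical
  rw [SimpleGraph.isTree_iff] at hnt
  rcases not_and_or.mp hnt with hc | ha
  · rw [← Matrix.exists_vecMul_eq_zero_iff]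
    have hnall : ¬ ∀ v, H.Reachable S v := by
      intro hall
      haveI : Nonempty V := ⟨S⟩
      exact hc (SimpleGraph.Connected.mk (fun u v => (hall u).symm.trans (hall v)))
    push_neg at hnall
    obtain ⟨v₀, hv₀⟩ := hnall
    refine ⟨fun w => if H.Reachable S w.1 then 0 else 1, ?_, ?_⟩
    · intro h0
      have := congrFun h0 ⟨v₀, fun hv => hv₀ (hv ▸ (SimpleGraph.Reachable.refl S : H.Reachable S S))⟩
      simp only [hv₀, if_neg] at this
      exact one_ne_zero this
    · funext w'
      have hsum : (Matrix.vecMul (fun w : {w : V // w ≠ S} =>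
            if H.Reachable S w.1 then (0:ℤ) else 1) ((BincZ G S).submatrix id φ)) w'
          = ∑ w : {w : V // w ≠ S},
              (fun u => if H.Reachable S u then (0:ℤ) else 1) w.1 * vinc w.1 (φ w') := by
        rw [Matrix.vecMul, dotProduct]
        rfl
      have hyS : (fun u => if H.Reachable S u then (0:ℤ) else 1) S = 0 := by
        show (if H.Reachable S S then (0:ℤ) else 1) = 0
        exact if_pos (SimpleGraph.Reachable.refl S)
      rw [hsum, sum_incZ (G := G) (fun u => if H.Reachable S u then (0:ℤ) else 1) hyS (φ w'),
        Pi.zero_apply]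
      have hadj : H.Adj (φ w').1.1 (φ w').1.2 := (hrange (φ w')).mpr ⟨w', rfl⟩
      have hiff : H.Reachable S (φ w').1.1 ↔ H.Reachable S (φ w').1.2 :=
        ⟨fun h => h.trans hadj.reachable, fun h => h.trans hadj.symm.reachable⟩
      by_cases hr : H.Reachable S (φ w').1.1
      · rw [if_pos (hiff.mp hr), if_pos hr, sub_self]
      · rw [if_neg (fun h => hr (hiff.mpr h)), if_neg hr, sub_self]
  · rw [← Matrix.exists_mulVec_eq_zero_iff]
    simp only [SimpleGraph.IsAcyclic, not_forall, not_not] at ha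
    obtain ⟨v₀, c, hc⟩ := ha
    refine ⟨fun w' => wsgn c (φ w'), ?_, ?_⟩
    · cases c with
      | nil => exact absurd hc SimpleGraph.Walk.IsCycle.not_of_nil
      | @cons _ x _ hadj p =>
        have hmem : ((SimpleGraph.Walk.cons hadj p).darts.map SimpleGraph.Dart.toProd)
            = (v₀, x) :: p.darts.map SimpleGraph.Dart.toProd := by
          rw [SimpleGraph.Walk.darts_cons, List.map_cons]
        intro h0
        rcases hadj.ne.lt_or_gt with hlt | hlt
        · obtain ⟨w₀, hw₀⟩ := (hrange ⟨(v₀, x), hlt, hHG hadj⟩).mp hadj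
          have : wsgn (SimpleGraph.Walk.cons hadj p) (φ w₀) ≠ 0 := by
            rw [hw₀]
            apply wsgn_ne_zero
            left
            rw [hmem]
            exact List.mem_cons_self
          exact this (congrFun h0 w₀)
        · obtain ⟨w₀, hw₀⟩ := (hrange ⟨(x, v₀), hlt, hHG hadj.symm⟩).mp hadj.symm
          have : wsgn (SimpleGraph.Walk.cons hadj p) (φ w₀) ≠ 0 := by
            rw [hw₀]
            apply wsgn_ne_zero
            right
            rw [hmem]
            exact List.mem_cons_self
          exact this (congrFun h0 w₀)
    · funext w
      have hsum : (((BincZ G S).submatrix id φ).mulVec (fun w' => wsgn c (φ w'))) w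
          = ∑ w', wsgn c (φ w') * vinc w.1 (φ w') := by
        rw [Matrix.mulVec, dotProduct]
        exact Finset.sum_congr rfl (fun w' _ => mul_comm _ _)
      rw [hsum,
        sum_extend φ hφ (fun g => wsgn c g * vinc w.1 g)
          (fun g hg => by
            show wsgn c g * vinc w.1 g = 0
            rw [wsgn_eq_zero_of_not_adj (fun h2 => hg ((hrange g).mp h2)), zero_mul]),
        key_sum hHG c hc.isTrail.edges_nodup w.1, sub_self, Pi.zero_apply]



open Finset

lemma det_rows_sum {m n : Type*} [Fintype m] [Fintype n] [DecidableEq m] [DecidableEq n]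
    (A : Matrix m n ℚ) (B : Matrix n m ℚ) :
    (A * B).det = ∑ φ : m → n, (∏ i, A i (φ i)) * (B.submatrix φ id).det := by
  classical
  have h0 : (A * B) = fun i => ∑ k, A i k • B k := by
    ext i j
    simp [Matrix.mul_apply, Finset.sum_apply]
  have h1 : (A * B).det
      = (Matrix.detRowAlternating (R := ℚ) (n := m)).toMultilinearMap
          (fun i => ∑ k, A i k • B k) := by
    rw [← h0]; rfl
  rw [h1]
  rw [(Matrix.detRowAlternating (R := ℚ) (n := m)).toMultilinearMap.map_sum
    (g := fun i k => A i k • B k)]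
  refine Finset.sum_congr rfl (fun φ _ => ?_)
  have h2 := (Matrix.detRowAlternating (R := ℚ) (n := m)).toMultilinearMap.map_smul_univ
    (fun i => A i (φ i)) (fun i => B (φ i))
  rw [h2]
  rw [smul_eq_mul]
  rfl

lemma det_mul_eq_sum_inj {m n : Type*} [Fintype m] [Fintype n] [DecidableEq m] [DecidableEq n]
    (A : Matrix m n ℚ) (B : Matrix n m ℚ) :
    (A * B).det = ∑ φ ∈ Finset.univ.filter (fun φ : m → n => Function.Injective φ),
      (∏ i, A i (φ i)) * (B.submatrix φ id).det := by
  classical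
  rw [det_rows_sum]
  refine (Finset.sum_filter_of_ne (fun φ _ hne => ?_)).symm
  by_contra hinj
  apply hne
  obtain ⟨i, j, hij, hne'⟩ : ∃ i j, φ i = φ j ∧ i ≠ j := by
    rw [Function.Injective] at hinj
    push_neg at hinj
    obtain ⟨i, j, h1, h2⟩ := hinj
    exact ⟨i, j, h1, h2⟩
  have : (B.submatrix φ id).det = 0 :=
    Matrix.det_zero_of_row_eq hne' (by
      funext k
      simp [Matrix.submatrix_apply, hij])
  rw [this, mul_zero]

lemma per_emb {m n : Type*} [Fintype m] [Fintype n] [DecidableEq m] [DecidableEq n]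
    (A : Matrix m n ℚ) (B : Matrix n m ℚ) (ψ : m ↪ n) :
    (A.submatrix id ψ).det * (B.submatrix ψ id).det
      = ∑ σ : Equiv.Perm m, (∏ i, A i (ψ (σ i))) * (B.submatrix (ψ ∘ σ) id).det := by
  classical
  have hperm : ∀ σ : Equiv.Perm m,
      (B.submatrix (⇑ψ ∘ ⇑σ) id).det = (Equiv.Perm.sign σ : ℚ) * (B.submatrix ψ id).det := by
    intro σ
    have : B.submatrix (⇑ψ ∘ ⇑σ) id = (B.submatrix ψ id).submatrix σ id := by
      rw [Matrix.submatrix_submatrix]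
      rfl
    rw [this, Matrix.det_permute]
  have hprod : ∀ σ : Equiv.Perm m,
      (∏ i, A i (ψ (σ i))) = ∏ i, A (σ⁻¹ i) (ψ i) := by
    intro σ
    exact Fintype.prod_equiv σ _ _ (fun i => by simp)
  calc (A.submatrix id ψ).det * (B.submatrix ψ id).det
      = (∑ σ : Equiv.Perm m, (Equiv.Perm.sign σ : ℚ) * ∏ i, A (σ i) (ψ i))
          * (B.submatrix ψ id).det := by
        rw [Matrix.det_apply']
        rfl
    _ = ∑ σ : Equiv.Perm m, (Equiv.Perm.sign σ : ℚ) * (∏ i, A (σ i) (ψ i))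
          * (B.submatrix ψ id).det := by
        rw [Finset.sum_mul]
    _ = ∑ σ : Equiv.Perm m, (Equiv.Perm.sign σ⁻¹ : ℚ) * (∏ i, A (σ⁻¹ i) (ψ i))
          * (B.submatrix ψ id).det := by
        refine Fintype.sum_equiv (Equiv.inv (Equiv.Perm m)) _ _ (fun σ => ?_)
        simp
    _ = ∑ σ : Equiv.Perm m, (∏ i, A i (ψ (σ i))) * (B.submatrix (⇑ψ ∘ ⇑σ) id).det := by
        refine Finset.sum_congr rfl (fun σ _ => ?_)
        rw [hperm σ, hprod σ]
        have hsgn : (Equiv.Perm.sign σ⁻¹ : ℚ) = (Equiv.Perm.sign σ : ℚ) := by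
          rw [Equiv.Perm.sign_inv]
        rw [hsgn]
        ring

lemma cauchy_binet {m n : Type*} [Fintype m] [Fintype n] [DecidableEq m] [DecidableEq n]
    (A : Matrix m n ℚ) (B : Matrix n m ℚ) :
    ((Nat.factorial (Fintype.card m)) : ℚ) * (A * B).det
      = ∑ ψ : m ↪ n, (A.submatrix id ψ).det * (B.submatrix ψ id).det := by
  classical
  have hembsum : ∀ σ : Equiv.Perm m,
      (∑ ψ : m ↪ n, (∏ i, A i (ψ (σ i))) * (B.submatrix (⇑ψ ∘ ⇑σ) id).det)
        = ∑ ψ : m ↪ n, (∏ i, A i (ψ i)) * (B.submatrix ψ id).det := by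
    intro σ
    let Eσ : (m ↪ n) ≃ (m ↪ n) :=
      ⟨fun ψ => σ.toEmbedding.trans ψ, fun ψ => σ.symm.toEmbedding.trans ψ,
        fun ψ => by ext x; simp, fun ψ => by ext x; simp⟩
    refine Fintype.sum_equiv Eσ _ _ (fun ψ => ?_)
    have h1 : ⇑(Eσ ψ) = ⇑ψ ∘ ⇑σ := rfl
    rw [h1]
    rfl
  have hinj : ∑ ψ : m ↪ n, (∏ i, A i (ψ i)) * (B.submatrix ψ id).det
      = ∑ φ ∈ Finset.univ.filter (fun φ : m → n => Function.Injective φ),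
          (∏ i, A i (φ i)) * (B.submatrix φ id).det := by
    refine Finset.sum_bij (fun ψ _ => (ψ : m → n)) ?_ ?_ ?_ ?_
    · intro ψ _
      simp [ψ.injective]
    · intro ψ _ ψ' _ h
      exact Function.Embedding.coe_injective h
    · intro φ hφ
      exact ⟨⟨φ, (Finset.mem_filter.mp hφ).2⟩, Finset.mem_univ _, rfl⟩
    · intro ψ _
      rfl
  calc ((Nat.factorial (Fintype.card m)) : ℚ) * (A * B).det
      = ∑ _σ : Equiv.Perm m, (A * B).det := by
        rw [Finset.sum_const, Finset.card_univ, Fintype.card_perm, nsmul_eq_mul]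
    _ = ∑ σ : Equiv.Perm m, ∑ ψ : m ↪ n, (∏ i, A i (ψ (σ i))) * (B.submatrix (⇑ψ ∘ ⇑σ) id).det := by
        refine Finset.sum_congr rfl (fun σ _ => ?_)
        exact (det_mul_eq_sum_inj A B).trans (hinj.symm.trans (hembsum σ).symm)
    _ = ∑ ψ : m ↪ n, ∑ σ : Equiv.Perm m, (∏ i, A i (ψ (σ i))) * (B.submatrix (⇑ψ ∘ ⇑σ) id).det :=
        Finset.sum_comm
    _ = ∑ ψ : m ↪ n, (A.submatrix id ψ).det * (B.submatrix ψ id).det := by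
        refine Finset.sum_congr rfl (fun ψ _ => ?_)
        rw [per_emb]



/-- The graph spanned by a family of oriented edges. -/
def Gr {G : SimpleGraph V} {α : Type*} (ψ : α → OrientedEdge G) : SimpleGraph V :=
  SimpleGraph.fromEdgeSet (Set.range (fun w => s((ψ w).1.1, (ψ w).1.2)))

omit [Fintype V] in
lemma Gr_le {G : SimpleGraph V} {α : Type*} (ψ : α → OrientedEdge G) : Gr ψ ≤ G := by
  intro u v huv
  rw [Gr, SimpleGraph.fromEdgeSet_adj] at huv
  obtain ⟨⟨w, hw⟩, _⟩ := huv
  rcases Sym2.eq_iff.mp hw with ⟨h1, h2⟩ | ⟨h1, h2⟩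
  · exact h1 ▸ h2 ▸ (ψ w).2.2
  · exact (h1 ▸ h2 ▸ (ψ w).2.2).symm

omit [Fintype V] in
lemma Gr_adj_iff {G : SimpleGraph V} {α : Type*} (ψ : α → OrientedEdge G)
    (g : OrientedEdge G) :
    (Gr ψ).Adj g.1.1 g.1.2 ↔ g ∈ Set.range ψ := by
  rw [Gr, SimpleGraph.fromEdgeSet_adj]
  constructor
  · rintro ⟨⟨w, hw⟩, hne⟩
    refine ⟨w, ?_⟩
    rcases Sym2.eq_iff.mp hw with ⟨h1, h2⟩ | ⟨h1, h2⟩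
    · exact Subtype.ext (Prod.ext h1 h2)
    · exact absurd (h2 ▸ h1 ▸ (ψ w).2.1) (asymm g.2.1)
  · rintro ⟨w, rfl⟩
    exact ⟨⟨w, rfl⟩, (ψ w).2.1.ne⟩

omit [Fintype V] in
lemma Gr_eq_iff {G H : SimpleGraph V} {α : Type*} (ψ : α → OrientedEdge G)
    (hHG : H ≤ G) :
    Gr ψ = H ↔ Set.range ψ = {g : OrientedEdge G | H.Adj g.1.1 g.1.2} := by
  constructor
  · rintro rfl
    ext g
    exact (Gr_adj_iff ψ g).symm
  · intro h
    have hkey : ∀ u v : V, u < v → ((Gr ψ).Adj u v ↔ H.Adj u v) := by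
      intro u v huv
      by_cases hG : G.Adj u v
      · have := Gr_adj_iff ψ ⟨(u, v), huv, hG⟩
        rw [h] at this
        exact this
      · constructor
        · intro hA; exact absurd (Gr_le ψ hA) hG
        · intro hA; exact absurd (hHG hA) hG
    ext u v
    rcases lt_trichotomy u v with huv | rfl | hvu
    · exact hkey u v huv
    · simp
    · rw [SimpleGraph.adj_comm (Gr ψ) u v, SimpleGraph.adj_comm H u v]
      exact hkey v u hvu

/-- Oriented edges of a subgraph are in bijection with its edge set. -/
noncomputable def oEdgeEquiv {G H : SimpleGraph V} (hHG : H ≤ G) :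
    {g : OrientedEdge G // H.Adj g.1.1 g.1.2} ≃ H.edgeSet := by
  refine Equiv.ofBijective (fun g => ⟨s(g.1.1.1, g.1.1.2), g.2⟩) ⟨?_, ?_⟩
  · intro g g' hgg'
    have := Sym2.eq_iff.mp (congrArg Subtype.val hgg')
    rcases this with ⟨h1, h2⟩ | ⟨h1, h2⟩
    · exact Subtype.ext (Subtype.ext (Prod.ext h1 h2))
    · exact absurd (h2 ▸ h1 ▸ g.1.2.1) (asymm g'.1.2.1)
  · rintro ⟨e, he⟩
    induction e with
    | _ u v =>
      rw [SimpleGraph.mem_edgeSet] at he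
      rcases lt_trichotomy u v with huv | rfl | hvu
      · exact ⟨⟨⟨(u, v), huv, hHG he⟩, he⟩, rfl⟩
      · exact absurd he (H.irrefl)
      · exact ⟨⟨⟨(v, u), hvu, hHG he.symm⟩, he.symm⟩, Subtype.ext (Sym2.eq_swap)⟩

lemma card_oEdge_tree {G H : SimpleGraph V} (hHG : H ≤ G) (hH : H.IsTree) :
    Nat.card {g : OrientedEdge G // H.Adj g.1.1 g.1.2} = Fintype.card V - 1 := by
  classical
  rw [Nat.card_congr (oEdgeEquiv hHG), Nat.card_eq_fintype_card,
    ← Set.toFinset_card]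
  have := hH.card_edgeFinset
  rw [SimpleGraph.edgeFinset] at this
  omega

lemma card_W (S : V) : Fintype.card {w : V // w ≠ S} = Fintype.card V - 1 := by
  classical
  have h1 : Fintype.card {w : V // w = S} = 1 := Fintype.card_subtype_eq S
  have h := Fintype.card_subtype_compl (fun w : V => w = S)
  rw [h1] at h
  exact h

/-- number of embeddings with prescribed range -/
lemma card_emb_range_eq {α β : Type*} [Fintype α] [Fintype β] [DecidableEq α] [DecidableEq β]
    (s : Set β) (hcard : Nat.card s = Fintype.card α) :
    Nat.card {ψ : α ↪ β // Set.range ⇑ψ = s} = (Fintype.card α).factorial := by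
  classical
  have E1 : {ψ : α ↪ β // Set.range ⇑ψ = s} ≃ (α ≃ s) := by
    refine ⟨fun x => Equiv.ofBijective (fun a => ⟨x.1 a, Set.mem_of_mem_of_subset (Set.mem_range_self a) x.2.le⟩)
      ⟨fun a b h => x.1.injective (congrArg Subtype.val h), ?_⟩,
      fun e => ⟨⟨fun a => (e a).1, fun a b h => e.injective (Subtype.ext h)⟩, ?_⟩, ?_, ?_⟩
    · rintro ⟨b, hb⟩
      obtain ⟨a, ha⟩ : b ∈ Set.range ⇑x.1 := x.2.symm ▸ hb
      exact ⟨a, Subtype.ext ha⟩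
    · ext b
      constructor
      · rintro ⟨a, rfl⟩
        exact (e a).2
      · intro hb
        exact ⟨e.symm ⟨b, hb⟩, congrArg Subtype.val (e.apply_symm_apply ⟨b, hb⟩)⟩
    · intro x
      ext a
      rfl
    · intro e
      ext a
      rfl
  rw [Nat.card_congr E1, Nat.card_eq_fintype_card]
  have : Fintype.card α = Fintype.card s := by
    rw [← hcard, Nat.card_eq_fintype_card]
  rw [Fintype.card_equiv (Fintype.equivOfCardEq this)]

lemma countTrees {G : SimpleGraph V} [DecidableRel G.Adj] (S : V) :
    Nat.card {ψ : {w : V // w ≠ S} ↪ OrientedEdge G // (Gr ⇑ψ).IsTree}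
      = (Fintype.card {w : V // w ≠ S}).factorial
          * Nat.card {H : SimpleGraph V // H ≤ G ∧ H.IsTree} := by
  classical
  set W := {w : V // w ≠ S}
  let Φ : {ψ : W ↪ OrientedEdge G // (Gr ⇑ψ).IsTree}
      → {H : SimpleGraph V // H ≤ G ∧ H.IsTree} :=
    fun x => ⟨Gr ⇑x.1, Gr_le ⇑x.1, x.2⟩
  letI : Fintype {H : SimpleGraph V // H ≤ G ∧ H.IsTree} := Fintype.ofFinite _
  letI : Fintype {ψ : W ↪ OrientedEdge G // (Gr ⇑ψ).IsTree} := Fintype.ofFinite _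
  letI : ∀ H : {H : SimpleGraph V // H ≤ G ∧ H.IsTree},
      Fintype {x : {ψ : W ↪ OrientedEdge G // (Gr ⇑ψ).IsTree} // Φ x = H} :=
    fun H => Fintype.ofFinite _
  have h1 := Nat.card_congr (Equiv.sigmaFiberEquiv Φ)
  rw [← h1]
  have h2 : ∀ H : {H : SimpleGraph V // H ≤ G ∧ H.IsTree},
      Nat.card {x : {ψ : W ↪ OrientedEdge G // (Gr ⇑ψ).IsTree} // Φ x = H}
        = (Fintype.card W).factorial := by
    intro H
    have E2 : {x : {ψ : W ↪ OrientedEdge G // (Gr ⇑ψ).IsTree} // Φ x = H}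
        ≃ {ψ : W ↪ OrientedEdge G // Gr ⇑ψ = H.1} :=
      ⟨fun x => ⟨x.1.1, congrArg Subtype.val x.2⟩,
       fun y => ⟨⟨y.1, by rw [y.2]; exact H.2.2⟩, Subtype.ext y.2⟩,
       fun x => Subtype.ext (Subtype.ext rfl), fun y => Subtype.ext rfl⟩
    have E3 : {ψ : W ↪ OrientedEdge G // Gr ⇑ψ = H.1}
        ≃ {ψ : W ↪ OrientedEdge G //
            Set.range ⇑ψ = {g : OrientedEdge G | H.1.Adj g.1.1 g.1.2}} :=
      Equiv.subtypeEquivRight (fun ψ => Gr_eq_iff ⇑ψ H.2.1)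
    rw [Nat.card_congr (E2.trans E3)]
    refine card_emb_range_eq _ ?_
    show Nat.card {g : OrientedEdge G // H.1.Adj g.1.1 g.1.2} = Fintype.card W
    rw [card_oEdge_tree H.2.1 H.2.2, card_W S]
  rw [Nat.card_eq_fintype_card, Fintype.card_sigma]
  have h3 : ∀ H : {H : SimpleGraph V // H ≤ G ∧ H.IsTree},
      Fintype.card {x : {ψ : W ↪ OrientedEdge G // (Gr ⇑ψ).IsTree} // Φ x = H}
        = (Fintype.card W).factorial := by
    intro H
    rw [← Nat.card_eq_fintype_card]
    exact h2 H
  rw [Finset.sum_congr rfl (fun H _ => h3 H), Finset.sum_const, Finset.card_univ,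
    Nat.card_eq_fintype_card, smul_eq_mul, mul_comm]


end EKaux

/-- **Edgewise Kirchhoff matrix tree theorem.**
For a finite connected simple graph `G` with at least two vertices, a pole `S` and a
spanning tree `T`, the absolute value of the determinant of the edgewise Kirchhoff
matrix `M_{G,S,T}` equals the number of spanning trees of `G`. -/
theorem abs_det_edgewiseKirchhoff_eq_card_spanning_trees
    {V : Type*} [Fintype V] [LinearOrder V]
    (G T : SimpleGraph V) [DecidableRel G.Adj] (S : V)
    (hm : 2 ≤ Fintype.card V) (hG : G.Connected)
    (hTsub : T ≤ G) (hTtree : T.IsTree)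
    (M : Matrix (KirchhoffRow G T S) (OrientedEdge G) ℚ)
    (hM : IsEdgewiseKirchhoffMatrix G T S M)
    (e : KirchhoffRow G T S ≃ OrientedEdge G) :
    |(M.submatrix e.symm id).det| =
      (Nat.card {H : SimpleGraph V // H ≤ G ∧ H.IsTree} : ℚ) := by
  classical
  obtain ⟨hM1, hM2⟩ := hM
  -- the rational incidence matrix
  set BQ : Matrix {w : V // w ≠ S} (OrientedEdge G) ℚ :=
    ((EKaux.BincZ G S).map (fun z : ℤ => (z : ℚ))) with hBQdef
  have hBQ_apply : ∀ (w : {w : V // w ≠ S}) (g : OrientedEdge G),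
      BQ w g = ((EKaux.vinc w.1 g : ℤ) : ℚ) := fun w g => rfl
  have hM1' : ∀ (w : {w : V // w ≠ S}) (g : OrientedEdge G),
      M (Sum.inl w) g = BQ w g := by
    intro w g
    rw [hM1 w g, hBQ_apply, EKaux.vinc]
    split_ifs <;> norm_num
  -- closed form for the cycle rows
  have hCrow : ∀ (f : {e : OrientedEdge G // ¬ T.Adj e.1.1 e.1.2}) (g : OrientedEdge G),
      M (Sum.inr f) g = (if g = f.1 then 1 else 0)
        + ((EKaux.wsgn (EKaux.pathTo hTtree f.1.1.2 f.1.1.1) g : ℤ) : ℚ) := by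
    intro f g
    rw [hM2 f g _ (EKaux.pathTo_isPath hTtree f.1.1.2 f.1.1.1)]
    by_cases hg : g = f.1
    · rw [if_pos hg, if_pos hg,
        EKaux.wsgn_eq_zero_of_not_adj (by rw [hg]; exact f.2)]
      norm_num
    · rw [if_neg hg, if_neg hg, EKaux.wsgn]
      split_ifs <;> norm_num
  -- cycle orthogonality over ℚ
  have hCYC : ∀ (f : {e : OrientedEdge G // ¬ T.Adj e.1.1 e.1.2}) (w : {w : V // w ≠ S}),
      ∑ g : OrientedEdge G, M (Sum.inr f) g * BQ w g = 0 := by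
    intro f w
    have hkey := EKaux.key_sum hTsub (EKaux.pathTo hTtree f.1.1.2 f.1.1.1)
      ((EKaux.pathTo_isPath hTtree f.1.1.2 f.1.1.1).isTrail.edges_nodup) w.1
    have hsplit : ∀ g : OrientedEdge G, M (Sum.inr f) g * BQ w g
        = (if g = f.1 then BQ w g else 0)
          + (((EKaux.wsgn (EKaux.pathTo hTtree f.1.1.2 f.1.1.1) g
              * EKaux.vinc w.1 g : ℤ) : ℚ)) := by
      intro g
      rw [hCrow f g, add_mul, ite_mul, one_mul, zero_mul, hBQ_apply]
      push_cast
      ring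
    rw [Finset.sum_congr rfl (fun g _ => hsplit g), Finset.sum_add_distrib,
      Finset.sum_ite_eq' Finset.univ f.1 (fun g => BQ w g), if_pos (Finset.mem_univ _),
      ← Int.cast_sum, hkey, hBQ_apply, ← Int.cast_add]
    have hz : (EKaux.vinc w.1 f.1
        + ((if f.1.1.1 = w.1 then 1 else 0) - (if f.1.1.2 = w.1 then 1 else 0)) : ℤ) = 0 := by
      rw [EKaux.vinc]
      have hne : f.1.1.1 ≠ f.1.1.2 := ne_of_lt f.1.2.1
      split_ifs with h1 h2 <;> try norm_num
      · exact hne (h2.trans h1.symm)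
    rw [hz, Int.cast_zero]
  -- cardinality matching, column equivalence
  have hcardTr : Fintype.card {g : OrientedEdge G // T.Adj g.1.1 g.1.2}
      = Fintype.card {w : V // w ≠ S} := by
    have h1 := EKaux.card_oEdge_tree hTsub hTtree
    rw [Nat.card_eq_fintype_card] at h1
    rw [h1, EKaux.card_W S]
  set ι : {g : OrientedEdge G // T.Adj g.1.1 g.1.2} ≃ {w : V // w ≠ S} :=
    Fintype.equivOfCardEq hcardTr with hι
  set colE : ({w : V // w ≠ S} ⊕ {e : OrientedEdge G // ¬ T.Adj e.1.1 e.1.2})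
      ≃ OrientedEdge G :=
    (Equiv.sumCongr ι.symm (Equiv.refl _)).trans
      (Equiv.sumCompl (fun g : OrientedEdge G => T.Adj g.1.1 g.1.2)) with hcolE
  have hcol_inl : ∀ w' : {w : V // w ≠ S}, colE (Sum.inl w') = (ι.symm w').1 := fun w' => rfl
  have hcol_inr : ∀ f : {e : OrientedEdge G // ¬ T.Adj e.1.1 e.1.2},
      colE (Sum.inr f) = f.1 := fun f => rfl
  set Msq := M.submatrix id ⇑colE with hMsqdef
  have habs : |(M.submatrix (⇑e.symm) id).det| = |Msq.det| := by
    have hsub : M.submatrix (⇑e.symm) id = Msq.submatrix ⇑e.symm ⇑colE.symm := by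
      ext g g'
      rw [hMsqdef, Matrix.submatrix_apply, Matrix.submatrix_apply, Matrix.submatrix_apply,
        Equiv.apply_symm_apply]
      rfl
    rw [hsub, Matrix.abs_det_submatrix_equiv_equiv]
  -- block structure
  set BT : Matrix {w : V // w ≠ S} {w : V // w ≠ S} ℚ :=
    fun w w' => BQ w (colE (Sum.inl w')) with hBT
  set BN : Matrix {w : V // w ≠ S} {e : OrientedEdge G // ¬ T.Adj e.1.1 e.1.2} ℚ :=
    fun w f => BQ w f.1 with hBN
  set CT : Matrix {e : OrientedEdge G // ¬ T.Adj e.1.1 e.1.2} {w : V // w ≠ S} ℚ :=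
    fun f w' => M (Sum.inr f) (colE (Sum.inl w')) with hCT
  have hMone : ∀ f f' : {e : OrientedEdge G // ¬ T.Adj e.1.1 e.1.2},
      M (Sum.inr f) f'.1 = (1 : Matrix _ _ ℚ) f f' := by
    intro f f'
    rw [hCrow f f'.1, EKaux.wsgn_eq_zero_of_not_adj f'.2, Int.cast_zero, add_zero,
      Matrix.one_apply]
    by_cases hff : f = f'
    · rw [if_pos (congrArg Subtype.val hff.symm), if_pos hff]
    · rw [if_neg (fun hv => hff (Subtype.ext (hv.symm : f.1 = f'.1))), if_neg hff]
  have hblocks : Msq = Matrix.fromBlocks BT BN CT 1 := by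
    ext i j
    cases i with
    | inl w =>
      cases j with
      | inl w' =>
        rw [hMsqdef, Matrix.submatrix_apply, id_eq, Matrix.fromBlocks_apply₁₁, hM1']
      | inr f' =>
        rw [hMsqdef, Matrix.submatrix_apply, id_eq, Matrix.fromBlocks_apply₁₂, hM1', hcol_inr]
    | inr f =>
      cases j with
      | inl w' =>
        rw [hMsqdef, Matrix.submatrix_apply, id_eq, Matrix.fromBlocks_apply₂₁]
      | inr f' =>
        rw [hMsqdef, Matrix.submatrix_apply, id_eq, Matrix.fromBlocks_apply₂₂, hcol_inr]
        exact hMone f f'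
  set Rsq : Matrix ({w : V // w ≠ S} ⊕ {e : OrientedEdge G // ¬ T.Adj e.1.1 e.1.2})
      ({w : V // w ≠ S} ⊕ {e : OrientedEdge G // ¬ T.Adj e.1.1 e.1.2}) ℚ :=
    Matrix.fromBlocks BT.transpose 0 BN.transpose 1 with hRsq
  have hTL : BT * BT.transpose + BN * BN.transpose = BQ * BQ.transpose := by
    ext w w'
    have hsum : (∑ w'' : {w : V // w ≠ S}, BT w w'' * BT.transpose w'' w')
        + (∑ f : {e : OrientedEdge G // ¬ T.Adj e.1.1 e.1.2}, BN w f * BN.transpose f w')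
        = ∑ x : ({w : V // w ≠ S} ⊕ {e : OrientedEdge G // ¬ T.Adj e.1.1 e.1.2}),
            BQ w (colE x) * BQ w' (colE x) :=
      (Fintype.sum_sum_type (fun x => BQ w (colE x) * BQ w' (colE x))).symm
    rw [Matrix.add_apply, Matrix.mul_apply, Matrix.mul_apply, Matrix.mul_apply, hsum]
    exact Fintype.sum_equiv colE (fun x => BQ w (colE x) * BQ w' (colE x))
      (fun g => BQ w g * BQ w' g) (fun x => rfl)
  have hBL : CT * BT.transpose
      + (1 : Matrix {e : OrientedEdge G // ¬ T.Adj e.1.1 e.1.2}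
          {e : OrientedEdge G // ¬ T.Adj e.1.1 e.1.2} ℚ) * BN.transpose = 0 := by
    rw [Matrix.one_mul]
    ext f w
    have hNsum : (∑ f' : {e : OrientedEdge G // ¬ T.Adj e.1.1 e.1.2},
        M (Sum.inr f) (colE (Sum.inr f')) * BQ w (colE (Sum.inr f'))) = BQ w f.1 := by
      have hterm : ∀ f' : {e : OrientedEdge G // ¬ T.Adj e.1.1 e.1.2},
          M (Sum.inr f) (colE (Sum.inr f')) * BQ w (colE (Sum.inr f'))
            = if f' = f then BQ w f'.1 else 0 := by
        intro f'
        rw [hcol_inr, hMone f f', Matrix.one_apply]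
        by_cases hff : f = f'
        · rw [if_pos hff, if_pos hff.symm, one_mul]
        · rw [if_neg hff, if_neg (fun h => hff h.symm), zero_mul]
      rw [Finset.sum_congr rfl (fun f' _ => hterm f'), Finset.sum_ite_eq' Finset.univ f,
        if_pos (Finset.mem_univ _)]
    have hsum : (∑ w' : {w : V // w ≠ S}, CT f w' * BT.transpose w' w) + BQ w f.1
        = ∑ x : ({w : V // w ≠ S} ⊕ {e : OrientedEdge G // ¬ T.Adj e.1.1 e.1.2}),
            M (Sum.inr f) (colE x) * BQ w (colE x) := by
      rw [Fintype.sum_sum_type (fun x => M (Sum.inr f) (colE x) * BQ w (colE x)), ← hNsum]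
      rfl
    rw [Matrix.add_apply, Matrix.mul_apply, Matrix.zero_apply]
    have : Matrix.transpose BN f w = BQ w f.1 := rfl
    rw [this, hsum, Fintype.sum_equiv colE
      (fun x => M (Sum.inr f) (colE x) * BQ w (colE x))
      (fun g => M (Sum.inr f) g * BQ w g) (fun x => rfl)]
    exact hCYC f w
  have hMR : Msq * Rsq = Matrix.fromBlocks (BQ * BQ.transpose) BN 0 1 := by
    rw [hblocks, hRsq, Matrix.fromBlocks_multiply, hTL, hBL]
    rw [Matrix.mul_zero, Matrix.mul_one, zero_add, Matrix.mul_zero, Matrix.one_mul, zero_add]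
  have hdetR : Rsq.det = BT.det := by
    rw [hRsq, Matrix.det_fromBlocks_zero₁₂, Matrix.det_one, mul_one, Matrix.det_transpose]
  have hdetMR : Msq.det * BT.det = (BQ * BQ.transpose).det := by
    rw [← hdetR, ← Matrix.det_mul, hMR, Matrix.det_fromBlocks_zero₂₁, Matrix.det_one, mul_one]
  -- |det BT| = 1
  have hφinj : Function.Injective (fun w' : {w : V // w ≠ S} => colE (Sum.inl w')) :=
    fun a b h => Sum.inl_injective (colE.injective h)
  have hφrange : ∀ g : OrientedEdge G, T.Adj g.1.1 g.1.2
      ↔ g ∈ Set.range (fun w' : {w : V // w ≠ S} => colE (Sum.inl w')) := by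
    intro g
    constructor
    · intro hadj
      refine ⟨ι ⟨g, hadj⟩, ?_⟩
      show colE (Sum.inl (ι ⟨g, hadj⟩)) = g
      rw [hcol_inl, Equiv.symm_apply_apply]
    · rintro ⟨w', rfl⟩
      show T.Adj (colE (Sum.inl w')).1.1 (colE (Sum.inl w')).1.2
      rw [hcol_inl]
      exact (ι.symm w').2
  have hBTpm : BT.det = 1 ∨ BT.det = -1 := by
    have hZ := EKaux.treedet hTsub hTtree S _ hφinj hφrange
    have hcast : BT.det = ((((EKaux.BincZ G S).submatrix id
        (fun w' : {w : V // w ≠ S} => colE (Sum.inl w'))).det : ℤ) : ℚ) :=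
      ((Int.castRingHom ℚ).map_det _).symm
    rcases hZ with h | h
    · left; rw [hcast, h]; norm_num
    · right; rw [hcast, h]; norm_num
  have hBTabs : |BT.det| = 1 := by
    rcases hBTpm with h | h <;> rw [h] <;> norm_num
  -- Cauchy–Binet and counting
  have hCB := EKaux.cauchy_binet BQ BQ.transpose
  have hterm : ∀ ψ : {w : V // w ≠ S} ↪ OrientedEdge G,
      (BQ.submatrix id ⇑ψ).det * (BQ.transpose.submatrix ⇑ψ id).det
        = if (EKaux.Gr ⇑ψ).IsTree then 1 else 0 := by
    intro ψ
    have h1 : (BQ.transpose.submatrix ⇑ψ id).det = (BQ.submatrix id ⇑ψ).det := by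
      rw [← Matrix.transpose_submatrix, Matrix.det_transpose]
    have h2 : (BQ.submatrix id ⇑ψ).det
        = ((((EKaux.BincZ G S).submatrix id ⇑ψ).det : ℤ) : ℚ) :=
      ((Int.castRingHom ℚ).map_det _).symm
    by_cases ht : (EKaux.Gr ⇑ψ).IsTree
    · rw [if_pos ht, h1, h2]
      rcases EKaux.treedet (EKaux.Gr_le ⇑ψ) ht S ⇑ψ ψ.injective
        (fun g => EKaux.Gr_adj_iff ⇑ψ g) with h | h <;> rw [h] <;> norm_num
    · rw [if_neg ht, h1, h2,
        EKaux.zerodet (EKaux.Gr_le ⇑ψ) ht S ⇑ψ ψ.injective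
          (fun g => EKaux.Gr_adj_iff ⇑ψ g)]
      norm_num
  rw [Finset.sum_congr rfl (fun ψ _ => hterm ψ), Finset.sum_boole] at hCB
  have hcount : (Finset.univ.filter
      (fun ψ : {w : V // w ≠ S} ↪ OrientedEdge G => (EKaux.Gr ⇑ψ).IsTree)).card
      = (Fintype.card {w : V // w ≠ S}).factorial
          * Nat.card {H : SimpleGraph V // H ≤ G ∧ H.IsTree} := by
    rw [← EKaux.countTrees S, Nat.card_eq_fintype_card, Fintype.card_subtype]
  rw [hcount] at hCB
  have hfac : (((Fintype.card {w : V // w ≠ S}).factorial : ℚ)) ≠ 0 :=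
    Nat.cast_ne_zero.mpr (Nat.factorial_ne_zero _)
  have hdetBB : (BQ * BQ.transpose).det
      = (Nat.card {H : SimpleGraph V // H ≤ G ∧ H.IsTree} : ℚ) := by
    apply mul_left_cancel₀ hfac
    rw [hCB]
    push_cast
    ring
  -- final assembly
  rw [habs, ← mul_one |Msq.det|, ← hBTabs, ← abs_mul, hdetMR, hdetBB,
    abs_of_nonneg (by positivity)]
end

section
/- Let G be a finite connected simple graph with m ≥ 2 vertices and n edges. Then the absolute value of the determinant of the edgewise Kirchhoff matrix does not depend on the choice of pole or spanning tree: for any vertices S, S' of G and any spanning trees T, T' of G, |det M_{G,S,T}| = |det M_{G,S',T'}|. -/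
open SimpleGraph

namespace KirchhoffAux

variable {V : Type*} [Fintype V] [LinearOrder V] {G : SimpleGraph V} [DecidableRel G.Adj]

/-- Incidence value of vertex `w` at oriented edge `g`. -/
def inc (w : V) (g : OrientedEdge G) : ℚ :=
  if g.1.2 = w then 1 else if g.1.1 = w then -1 else 0

lemma inc_eq (w : V) (g : OrientedEdge G) :
    inc w g = (if g.1.2 = w then 1 else 0) - (if g.1.1 = w then 1 else 0) := by
  have hne : g.1.1 ≠ g.1.2 := ne_of_lt g.2.1
  unfold inc
  by_cases h2 : g.1.2 = w
  · rw [if_pos h2, if_pos h2, if_neg (by rw [h2] at hne; exact hne)]; norm_num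
  · rw [if_neg h2, if_neg h2]
    by_cases h1 : g.1.1 = w
    · rw [if_pos h1, if_pos h1]; norm_num
    · rw [if_neg h1, if_neg h1]; norm_num

/-- Sum of incidence values over all vertices is zero. -/
lemma sum_inc (g : OrientedEdge G) : ∑ v : V, inc v g = 0 := by
  simp only [inc_eq, Finset.sum_sub_distrib, Finset.sum_ite_eq, Finset.mem_univ, if_pos,
    sub_self]

/-- Path entry vector. -/
def pe {H : SimpleGraph V} {a b : V} (P : H.Walk a b) (g : OrientedEdge G) : ℚ :=
  if (g.1.1, g.1.2) ∈ P.darts.map SimpleGraph.Dart.toProd then 1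
  else if (g.1.2, g.1.1) ∈ P.darts.map SimpleGraph.Dart.toProd then -1 else 0

lemma adj_of_mem_darts {H : SimpleGraph V} {a b : V} {P : H.Walk a b} {p : V × V}
    (h : p ∈ P.darts.map SimpleGraph.Dart.toProd) : H.Adj p.1 p.2 := by
  obtain ⟨d, hd, rfl⟩ := List.mem_map.mp h
  exact d.adj

lemma fst_mem_support_of_mem_darts {H : SimpleGraph V} {a b : V} {P : H.Walk a b} {p : V × V}
    (h : p ∈ P.darts.map SimpleGraph.Dart.toProd) : p.1 ∈ P.support := by
  obtain ⟨d, hd, rfl⟩ := List.mem_map.mp h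
  exact P.dart_fst_mem_support_of_mem_darts hd

lemma snd_mem_support_of_mem_darts {H : SimpleGraph V} {a b : V} {P : H.Walk a b} {p : V × V}
    (h : p ∈ P.darts.map SimpleGraph.Dart.toProd) : p.2 ∈ P.support := by
  obtain ⟨d, hd, rfl⟩ := List.mem_map.mp h
  exact P.dart_snd_mem_support_of_mem_darts hd

lemma pe_eq_zero_of_not_adj {H : SimpleGraph V} {a b : V} (P : H.Walk a b)
    {g : OrientedEdge G} (hg : ¬ H.Adj g.1.1 g.1.2) : pe P g = 0 := by
  unfold pe
  rw [if_neg, if_neg]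
  · intro h; exact hg (adj_of_mem_darts h).symm
  · intro h; exact hg (adj_of_mem_darts h)

lemma pe_cons {H : SimpleGraph V} {a c b : V} (h : H.Adj a c) (P : H.Walk c b)
    (ha : a ∉ P.support) (g : OrientedEdge G) :
    pe (SimpleGraph.Walk.cons h P) g =
      pe P g + (if (g.1.1, g.1.2) = (a, c) then 1
        else if (g.1.2, g.1.1) = (a, c) then (-1 : ℚ) else 0) := by
  unfold pe
  rw [SimpleGraph.Walk.darts_cons, List.map_cons]
  simp only [List.mem_cons]
  by_cases h1 : (g.1.1, g.1.2) = (SimpleGraph.Dart.mk (a, c) h).toProd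
  · have h1' : (g.1.1, g.1.2) = (a, c) := h1
    have hg1 : g.1.1 = a := congrArg Prod.fst h1'
    have hm1 : (g.1.1, g.1.2) ∉ P.darts.map SimpleGraph.Dart.toProd := fun hmem =>
      ha (hg1 ▸ fst_mem_support_of_mem_darts hmem)
    have hm2 : (g.1.2, g.1.1) ∉ P.darts.map SimpleGraph.Dart.toProd := fun hmem =>
      ha (hg1 ▸ snd_mem_support_of_mem_darts hmem)
    rw [if_pos (Or.inl h1), if_neg hm1, if_neg hm2, if_pos h1']
    norm_num
  · have h1' : (g.1.1, g.1.2) ≠ (a, c) := h1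
    by_cases h2 : (g.1.2, g.1.1) = (a, c)
    · have hg2 : g.1.2 = a := congrArg Prod.fst h2
      have hm1 : (g.1.1, g.1.2) ∉ P.darts.map SimpleGraph.Dart.toProd := fun hmem =>
        ha (hg2 ▸ snd_mem_support_of_mem_darts hmem)
      have hm2 : (g.1.2, g.1.1) ∉ P.darts.map SimpleGraph.Dart.toProd := fun hmem =>
        ha (hg2 ▸ fst_mem_support_of_mem_darts hmem)
      rw [if_neg (by rintro (h | h); exact h1 h; exact hm1 h), if_pos (Or.inl h2),
        if_neg hm1, if_neg hm2, if_neg h1', if_pos h2]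
      norm_num
    · rw [if_congr (or_iff_right h1) rfl rfl, if_congr (or_iff_right h2) rfl rfl,
        if_neg h1', if_neg h2]
      ring

lemma sum_inc_single (w : V) {a c : V} (hadj : G.Adj a c) :
    ∑ g : OrientedEdge G, inc w g *
      (if (g.1.1, g.1.2) = (a, c) then 1
        else if (g.1.2, g.1.1) = (a, c) then (-1 : ℚ) else 0) =
      (if w = c then 1 else 0) - (if w = a then 1 else 0) := by
  have hne : a ≠ c := hadj.ne
  have hval : ∀ (x y : V), x ≠ y →
      (if y = w then (1:ℚ) else if x = w then -1 else 0) =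
        (if w = y then 1 else 0) - (if w = x then 1 else 0) := by
    intro x y hxy
    rcases eq_or_ne y w with rfl | h2
    · simp [hxy, Ne.symm hxy]
    · rcases eq_or_ne x w with rfl | h1
      · simp [h2, Ne.symm h2]
      · simp [h1, h2, Ne.symm h1, Ne.symm h2]
  rcases lt_or_gt_of_ne hne with hlt | hgt
  · set oe : OrientedEdge G := ⟨(a, c), hlt, hadj⟩ with hoe
    have key : ∀ g : OrientedEdge G, inc w g *
        (if (g.1.1, g.1.2) = (a, c) then 1
          else if (g.1.2, g.1.1) = (a, c) then (-1 : ℚ) else 0) =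
        if g = oe then inc w oe else 0 := by
      intro g
      by_cases hg : g = oe
      · subst hg; rw [if_pos rfl, if_pos rfl, mul_one]
      · rw [if_neg (fun h1 => hg (Subtype.ext (Prod.ext (congrArg Prod.fst h1)
            (congrArg Prod.snd h1)))), if_neg, mul_zero, if_neg hg]
        intro h2
        have hc : g.1.1 = c := congrArg Prod.snd h2
        have ha' : g.1.2 = a := congrArg Prod.fst h2
        have hlt' := g.2.1
        rw [hc, ha'] at hlt'
        exact absurd hlt (asymm hlt')
    rw [Finset.sum_congr rfl (fun g _ => key g), Finset.sum_ite_eq' Finset.univ oe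
      (fun _ => inc w oe), if_pos (Finset.mem_univ oe)]
    exact hval a c hne
  · set oe : OrientedEdge G := ⟨(c, a), hgt, hadj.symm⟩ with hoe
    have key : ∀ g : OrientedEdge G, inc w g *
        (if (g.1.1, g.1.2) = (a, c) then 1
          else if (g.1.2, g.1.1) = (a, c) then (-1 : ℚ) else 0) =
        if g = oe then -inc w oe else 0 := by
      intro g
      by_cases hg : g = oe
      · subst hg
        rw [if_neg (fun h1 => hne (congrArg Prod.fst h1).symm), if_pos rfl, if_pos rfl]
        ring
      · rw [if_neg, if_neg, mul_zero, if_neg hg]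
        · intro h2
          exact hg (Subtype.ext (Prod.ext (congrArg Prod.snd h2) (congrArg Prod.fst h2)))
        · intro h1
          have hc : g.1.1 = a := congrArg Prod.fst h1
          have ha' : g.1.2 = c := congrArg Prod.snd h1
          have hlt' := g.2.1
          rw [hc, ha'] at hlt'
          exact absurd hlt' (asymm hgt)
    rw [Finset.sum_congr rfl (fun g _ => key g), Finset.sum_ite_eq' Finset.univ oe
      (fun _ => -inc w oe), if_pos (Finset.mem_univ oe)]
    have hv : inc w oe = (if w = a then 1 else 0) - (if w = c then 1 else 0) :=
      hval c a hne.symm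
    rw [hv]; ring

/-- Boundary of a path entry vector. -/
lemma sum_inc_pe {H : SimpleGraph V} (hHG : H ≤ G) {a b : V} (P : H.Walk a b)
    (hP : P.IsPath) (w : V) :
    ∑ g : OrientedEdge G, inc w g * pe P g =
      (if w = b then 1 else 0) - (if w = a then 1 else 0) := by
  induction P with
  | @nil u =>
    have hz : ∀ g : OrientedEdge G, pe (SimpleGraph.Walk.nil (G := H) (u := u)) g = 0 := by
      intro g; unfold pe
      simp [SimpleGraph.Walk.darts_nil]
    simp [hz]
  | @cons u c b h P ih =>
    rw [SimpleGraph.Walk.cons_isPath_iff] at hP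
    have key := pe_cons (G := G) h P hP.2
    calc ∑ g : OrientedEdge G, inc w g * pe (SimpleGraph.Walk.cons h P) g
        = ∑ g : OrientedEdge G, (inc w g * pe P g + inc w g *
            (if (g.1.1, g.1.2) = (u, c) then 1
              else if (g.1.2, g.1.1) = (u, c) then (-1 : ℚ) else 0)) := by
          refine Finset.sum_congr rfl fun g _ => ?_
          rw [key g, mul_add]
      _ = ((if w = b then 1 else 0) - (if w = c then 1 else 0)) +
            ((if w = c then 1 else 0) - (if w = u then 1 else 0)) := by
          rw [Finset.sum_add_distrib, ih hP.1, sum_inc_single w (hHG h)]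
      _ = (if w = b then 1 else 0) - (if w = u then 1 else 0) := by ring

section Rows

variable {T : SimpleGraph V} {S : V} {M : Matrix (KirchhoffRow G T S) (OrientedEdge G) ℚ}

lemma row_eq (hM : IsEdgewiseKirchhoffMatrix G T S M)
    (f : {e : OrientedEdge G // ¬ T.Adj e.1.1 e.1.2}) {P : T.Walk f.1.1.2 f.1.1.1}
    (hP : P.IsPath) (g : OrientedEdge G) :
    M (Sum.inr f) g = (if g = f.1 then 1 else 0) + pe P g := by
  rw [hM.2 f g P hP]
  by_cases hg : g = f.1
  · rw [if_pos hg, if_pos hg, pe_eq_zero_of_not_adj P (by rw [hg]; exact f.2), add_zero]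
  · rw [if_neg hg, if_neg hg, zero_add]; rfl

lemma eq_comm_ite (w x : V) : (if x = w then (1:ℚ) else 0) = (if w = x then 1 else 0) := by
  simp [eq_comm]

/-- A non-tree row is orthogonal to every incidence vector. -/
lemma sum_inc_row (hT : T ≤ G) (hTc : T.Connected) (hM : IsEdgewiseKirchhoffMatrix G T S M)
    (f : {e : OrientedEdge G // ¬ T.Adj e.1.1 e.1.2}) (w : V) :
    ∑ g : OrientedEdge G, inc w g * M (Sum.inr f) g = 0 := by
  obtain ⟨W⟩ := hTc.preconnected f.1.1.2 f.1.1.1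
  have hre := row_eq hM f (P := W.toPath.1) W.toPath.2
  calc ∑ g : OrientedEdge G, inc w g * M (Sum.inr f) g
      = ∑ g : OrientedEdge G, ((if g = f.1 then inc w g else 0) + inc w g * pe W.toPath.1 g) := by
        refine Finset.sum_congr rfl fun g _ => ?_
        rw [hre g, mul_add, mul_ite, mul_one, mul_zero]
    _ = inc w f.1 + ((if w = f.1.1.1 then 1 else 0) - (if w = f.1.1.2 then 1 else 0)) := by
        rw [Finset.sum_add_distrib, Finset.sum_ite_eq' Finset.univ f.1 (inc w),
          if_pos (Finset.mem_univ _), sum_inc_pe hT W.toPath.1 W.toPath.2 w]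
    _ = 0 := by
        simp only [inc_eq, eq_comm_ite]; ring

/-- Value of a non-tree row on non-tree edges. -/
lemma nontree_row_val (hTc : T.Connected) (hM : IsEdgewiseKirchhoffMatrix G T S M)
    (f : {e : OrientedEdge G // ¬ T.Adj e.1.1 e.1.2}) (g : OrientedEdge G)
    (hg : ¬ T.Adj g.1.1 g.1.2) :
    M (Sum.inr f) g = if g = f.1 then 1 else 0 := by
  obtain ⟨W⟩ := hTc.preconnected f.1.1.2 f.1.1.1
  rw [row_eq hM f W.toPath.2 g, pe_eq_zero_of_not_adj W.toPath.1 hg, add_zero]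

end Rows

/-- A vector supported on the edges of an acyclic graph with vanishing boundary is zero. -/
lemma eq_zero_of_supported {T : SimpleGraph V} (hTac : T.IsAcyclic)
    (z : OrientedEdge G → ℚ)
    (hbd : ∀ w : V, ∑ g : OrientedEdge G, inc w g * z g = 0)
    (hsupp : ∀ g : OrientedEdge G, ¬ T.Adj g.1.1 g.1.2 → z g = 0) :
    ∀ g, z g = 0 := by
  intro g₀
  by_cases hadj : T.Adj g₀.1.1 g₀.1.2
  swap
  · exact hsupp g₀ hadj
  classical
  set H := T \ SimpleGraph.fromEdgeSet {s(g₀.1.1, g₀.1.2)} with hH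
  set s : V → ℚ := fun v => if H.Reachable g₀.1.1 v then 1 else 0 with hs
  have hbridge : ¬ H.Reachable g₀.1.1 g₀.1.2 :=
    (SimpleGraph.isBridge_iff.mp (isAcyclic_iff_forall_adj_isBridge.mp hTac hadj))
  have hsum1 : ∀ g : OrientedEdge G, ∑ w : V, s w * inc w g = s g.1.2 - s g.1.1 := by
    intro g
    calc ∑ w : V, s w * inc w g
        = ∑ w : V, ((if g.1.2 = w then s w else 0) - (if g.1.1 = w then s w else 0)) := by
          refine Finset.sum_congr rfl fun w _ => ?_
          rw [inc_eq, mul_sub, mul_ite, mul_one, mul_zero, mul_ite, mul_one, mul_zero]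
      _ = s g.1.2 - s g.1.1 := by
          rw [Finset.sum_sub_distrib, Finset.sum_ite_eq, Finset.sum_ite_eq,
            if_pos (Finset.mem_univ _), if_pos (Finset.mem_univ _)]
  have h0 : ∑ g : OrientedEdge G, (s g.1.2 - s g.1.1) * z g = 0 := by
    calc ∑ g : OrientedEdge G, (s g.1.2 - s g.1.1) * z g
        = ∑ g : OrientedEdge G, ∑ w : V, s w * (inc w g * z g) := by
          refine Finset.sum_congr rfl fun g _ => ?_
          rw [← hsum1 g, Finset.sum_mul]
          exact Finset.sum_congr rfl fun w _ => by ring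
      _ = ∑ w : V, s w * ∑ g : OrientedEdge G, inc w g * z g := by
          rw [Finset.sum_comm]
          exact Finset.sum_congr rfl fun w _ => (Finset.mul_sum _ _ _).symm
      _ = 0 := by simp [hbd]
  rw [Finset.sum_eq_single g₀ ?other (by simp)] at h0
  · have h11 : s g₀.1.1 = 1 := if_pos (SimpleGraph.Reachable.refl _)
    have h12 : s g₀.1.2 = 0 := if_neg hbridge
    rw [h11, h12] at h0
    linarith
  case other =>
    intro g _ hgne
    by_cases hTg : T.Adj g.1.1 g.1.2
    · have hHadj : H.Adj g.1.1 g.1.2 := by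
        rw [hH, SimpleGraph.sdiff_adj]
        refine ⟨hTg, ?_⟩
        rw [SimpleGraph.fromEdgeSet_adj]
        rintro ⟨hmem, -⟩
        rw [Set.mem_singleton_iff] at hmem
        rcases Sym2.eq_iff.mp hmem with ⟨h1, h2⟩ | ⟨h1, h2⟩
        · exact hgne (Subtype.ext (Prod.ext h1 h2))
        · have := g.2.1
          rw [h1, h2] at this
          exact absurd g₀.2.1 (asymm this)
      have hsval : ∀ v, s v = if H.Reachable g₀.1.1 v then 1 else 0 := fun _ => rfl
      have hss : s g.1.2 = s g.1.1 := by
        rw [hsval, hsval]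
        by_cases hr : H.Reachable g₀.1.1 g.1.1
        · rw [if_pos (hr.trans hHadj.reachable), if_pos hr]
        · rw [if_neg (fun h => hr (h.trans hHadj.symm.reachable)), if_neg hr]
      rw [hss, sub_self, zero_mul]
    · rw [hsupp g hTg, mul_zero]

lemma row_inl {T : SimpleGraph V} {S : V} {M : Matrix (KirchhoffRow G T S) (OrientedEdge G) ℚ}
    (hM : IsEdgewiseKirchhoffMatrix G T S M) (w : {w : V // w ≠ S}) (g : OrientedEdge G) :
    M (Sum.inl w) g = inc w.1 g :=
  hM.1 w g

lemma sum_subtype_inc (S' : V) (g : OrientedEdge G) :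
    ∑ u : {u : V // u ≠ S'}, inc (G := G) u.1 g = - inc S' g := by
  have h1 : ∑ v : V, inc v g = 0 := sum_inc g
  have h2 : ∑ v ∈ Finset.univ.erase S', inc (G := G) v g
      = ∑ u : {u : V // u ≠ S'}, inc (G := G) u.1 g :=
    Finset.sum_subtype _ (by simp) _
  have h3 := Finset.sum_erase_add Finset.univ (fun v => inc (G := G) v g) (Finset.mem_univ S')
  rw [h1] at h3
  rw [← h2]
  linarith

/-- The transition matrix. -/
def transMat (T T' : SimpleGraph V) (S S' : V)
    (M : Matrix (KirchhoffRow G T S) (OrientedEdge G) ℚ) :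
    Matrix (KirchhoffRow G T S) (KirchhoffRow G T' S') ℚ :=
  fun r r' => match r, r' with
  | Sum.inl w, Sum.inl u => if w.1 = S' then -1 else if u.1 = w.1 then 1 else 0
  | Sum.inl _, Sum.inr _ => 0
  | Sum.inr _, Sum.inl _ => 0
  | Sum.inr f, Sum.inr f' => M (Sum.inr f) f'.1

lemma exists_int_factor {T T' : SimpleGraph V} {S S' : V}
    [Fintype {e : OrientedEdge G // ¬ T'.Adj e.1.1 e.1.2}]
    (hTsub : T ≤ G) (hTtree : T.IsTree) (hT'sub : T' ≤ G) (hT'tree : T'.IsTree)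
    {M : Matrix (KirchhoffRow G T S) (OrientedEdge G) ℚ}
    (hM : IsEdgewiseKirchhoffMatrix G T S M)
    {M' : Matrix (KirchhoffRow G T' S') (OrientedEdge G) ℚ}
    (hM' : IsEdgewiseKirchhoffMatrix G T' S' M') :
    ∃ A : Matrix (KirchhoffRow G T S) (KirchhoffRow G T' S') ℤ,
      M = A.map (fun k => (k : ℚ)) * M' := by
  classical
  set AQ := transMat (G := G) T T' S S' M with hAQ
  have hint : ∀ r r', ∃ k : ℤ, AQ r r' = (k : ℚ) := by
    rintro (w | f) (u | f')
    · simp only [hAQ, transMat]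
      split_ifs
      · exact ⟨-1, by norm_num⟩
      · exact ⟨1, by norm_num⟩
      · exact ⟨0, by norm_num⟩
    · exact ⟨0, by simp [hAQ, transMat]⟩
    · exact ⟨0, by simp [hAQ, transMat]⟩
    · simp only [hAQ, transMat]
      obtain ⟨W⟩ := hTtree.isConnected.preconnected f.1.1.2 f.1.1.1
      rw [hM.2 f f'.1 W.toPath.1 W.toPath.2]
      split_ifs
      · exact ⟨1, by norm_num⟩
      · exact ⟨1, by norm_num⟩
      · exact ⟨-1, by norm_num⟩
      · exact ⟨0, by norm_num⟩
  have hprod : M = AQ * M' := by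
    ext r g
    rw [Matrix.mul_apply, Fintype.sum_sum_type]
    cases r with
    | inl w =>
      have h2 : ∑ f' : {e : OrientedEdge G // ¬ T'.Adj e.1.1 e.1.2},
          AQ (Sum.inl w) (Sum.inr f') * M' (Sum.inr f') g = 0 := by
        simp [hAQ, transMat]
      rw [h2, add_zero]
      by_cases hw : w.1 = S'
      · have : ∀ u : {u : V // u ≠ S'},
            AQ (Sum.inl w) (Sum.inl u) * M' (Sum.inl u) g = -1 * inc u.1 g := by
          intro u
          rw [row_inl hM' u g]
          simp only [hAQ, transMat, if_pos hw]
        rw [Finset.sum_congr rfl (fun u _ => this u)]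
        rw [← Finset.mul_sum, sum_subtype_inc S' g, row_inl hM w g, hw]
        ring
      · have : ∀ u : {u : V // u ≠ S'},
            AQ (Sum.inl w) (Sum.inl u) * M' (Sum.inl u) g =
              if u = (⟨w.1, hw⟩ : {u : V // u ≠ S'}) then inc w.1 g else 0 := by
          intro u
          simp only [hAQ, transMat, if_neg hw]
          by_cases hu : u = (⟨w.1, hw⟩ : {u : V // u ≠ S'})
          · rw [if_pos hu, if_pos (by rw [hu]), row_inl hM' u g, one_mul, hu]
          · rw [if_neg hu, if_neg (fun h => hu (Subtype.ext h)), zero_mul]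
        rw [Finset.sum_congr rfl (fun u _ => this u),
          Finset.sum_ite_eq' Finset.univ _ (fun _ => inc w.1 g), if_pos (Finset.mem_univ _),
          row_inl hM w g]
    | inr f =>
      have h1 : ∑ u : {u : V // u ≠ S'},
          AQ (Sum.inr f) (Sum.inl u) * M' (Sum.inl u) g = 0 := by
        simp [hAQ, transMat]
      rw [h1, zero_add]
      set z : OrientedEdge G → ℚ := fun g => M (Sum.inr f) g -
        ∑ f' : {e : OrientedEdge G // ¬ T'.Adj e.1.1 e.1.2},
          M (Sum.inr f) f'.1 * M' (Sum.inr f') g with hz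
      have hzval : ∀ g, z g = M (Sum.inr f) g -
          ∑ f' : {e : OrientedEdge G // ¬ T'.Adj e.1.1 e.1.2},
            M (Sum.inr f) f'.1 * M' (Sum.inr f') g := fun _ => rfl
      have hbd : ∀ w : V, ∑ g : OrientedEdge G, inc w g * z g = 0 := by
        intro w
        have e1 : ∑ g : OrientedEdge G, inc w g * M (Sum.inr f) g = 0 :=
          sum_inc_row hTsub hTtree.isConnected hM f w
        have e2 : ∀ f', ∑ g : OrientedEdge G, inc w g * M' (Sum.inr f') g = 0 := fun f' =>
          sum_inc_row hT'sub hT'tree.isConnected hM' f' w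
        have expand : ∑ g : OrientedEdge G, inc w g * z g
            = (∑ g : OrientedEdge G, inc w g * M (Sum.inr f) g)
              - ∑ g : OrientedEdge G, ∑ f' : {e : OrientedEdge G // ¬ T'.Adj e.1.1 e.1.2},
                  inc w g * (M (Sum.inr f) f'.1 * M' (Sum.inr f') g) := by
          rw [← Finset.sum_sub_distrib]
          refine Finset.sum_congr rfl fun g _ => ?_
          rw [hzval g, mul_sub, Finset.mul_sum]
        rw [expand, e1, Finset.sum_comm]
        have : ∀ f' : {e : OrientedEdge G // ¬ T'.Adj e.1.1 e.1.2},
            ∑ g : OrientedEdge G, inc w g * (M (Sum.inr f) f'.1 * M' (Sum.inr f') g) = 0 := by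
          intro f'
          have : ∑ g : OrientedEdge G, inc w g * (M (Sum.inr f) f'.1 * M' (Sum.inr f') g)
              = M (Sum.inr f) f'.1 * ∑ g : OrientedEdge G, inc w g * M' (Sum.inr f') g := by
            rw [Finset.mul_sum]
            exact Finset.sum_congr rfl fun g _ => by ring
          rw [this, e2 f', mul_zero]
        simp [this]
      have hsupp : ∀ g : OrientedEdge G, ¬ T'.Adj g.1.1 g.1.2 → z g = 0 := by
        intro g hg
        rw [hzval g]
        set f₀ : {e : OrientedEdge G // ¬ T'.Adj e.1.1 e.1.2} := ⟨g, hg⟩ with hf₀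
        have : ∀ f' : {e : OrientedEdge G // ¬ T'.Adj e.1.1 e.1.2},
            M (Sum.inr f) f'.1 * M' (Sum.inr f') g =
              if f' = f₀ then M (Sum.inr f) g else 0 := by
          intro f'
          rw [nontree_row_val hT'tree.isConnected hM' f' g hg]
          by_cases hf : f' = f₀
          · rw [if_pos hf, if_pos (by rw [hf]), mul_one, hf]
          · rw [if_neg hf, if_neg (fun h => hf (Subtype.ext h.symm)), mul_zero]
        rw [Finset.sum_congr rfl (fun f' _ => this f'),
          Finset.sum_ite_eq' Finset.univ _ (fun _ => M (Sum.inr f) g),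
          if_pos (Finset.mem_univ _), sub_self]
      have hzero := eq_zero_of_supported hT'tree.IsAcyclic z hbd hsupp g
      rw [hzval g] at hzero
      have := sub_eq_zero.mp hzero
      rw [this]
      refine Finset.sum_congr rfl fun f' _ => ?_
      simp only [hAQ, transMat]
  choose k hk using hint
  refine ⟨Matrix.of fun r r' => k r r', ?_⟩
  have hmap : (Matrix.of fun r r' => k r r').map (fun x : ℤ => (x : ℚ)) = AQ := by
    ext r r'
    exact (hk r r').symm
  rw [hmap]
  exact hprod

end KirchhoffAux

/-- **Independence of the edgewise Kirchhoff determinant from the choices made.**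
For a finite connected simple graph `G` with at least two vertices, the absolute value
of the determinant of the edgewise Kirchhoff matrix does not depend on the choice of
the pole or of the spanning tree: `|det M_{G,S,T}| = |det M_{G,S',T'}|`. -/
theorem abs_det_edgewiseKirchhoff_well_defined
    {V : Type*} [Fintype V] [LinearOrder V]
    (G T T' : SimpleGraph V) [DecidableRel G.Adj] (S S' : V)
    (hm : 2 ≤ Fintype.card V) (hG : G.Connected)
    (hTsub : T ≤ G) (hTtree : T.IsTree)
    (hT'sub : T' ≤ G) (hT'tree : T'.IsTree)
    (M : Matrix (KirchhoffRow G T S) (OrientedEdge G) ℚ)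
    (hM : IsEdgewiseKirchhoffMatrix G T S M)
    (M' : Matrix (KirchhoffRow G T' S') (OrientedEdge G) ℚ)
    (hM' : IsEdgewiseKirchhoffMatrix G T' S' M')
    (e : KirchhoffRow G T S ≃ OrientedEdge G)
    (e' : KirchhoffRow G T' S' ≃ OrientedEdge G) :
    |(M.submatrix e.symm id).det| = |(M'.submatrix e'.symm id).det| := by
  classical
  obtain ⟨A, hA⟩ := KirchhoffAux.exists_int_factor hTsub hTtree hT'sub hT'tree hM hM'
  obtain ⟨B, hB⟩ := KirchhoffAux.exists_int_factor hT'sub hT'tree hTsub hTtree hM' hM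
  have h1 : M.submatrix e.symm id =
      (A.map (fun k : ℤ => (k : ℚ))).submatrix e.symm e'.symm * M'.submatrix e'.symm id := by
    rw [hA]
    exact Matrix.submatrix_mul _ _ _ _ _ e'.symm.bijective
  have h2 : M'.submatrix e'.symm id =
      (B.map (fun k : ℤ => (k : ℚ))).submatrix e'.symm e.symm * M.submatrix e.symm id := by
    rw [hB]
    exact Matrix.submatrix_mul _ _ _ _ _ e.symm.bijective
  set a : ℤ := (A.submatrix e.symm e'.symm).det with ha'
  set b : ℤ := (B.submatrix e'.symm e.symm).det with hb'
  have hd1 : (M.submatrix e.symm id).det = (a : ℚ) * (M'.submatrix e'.symm id).det := by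
    rw [h1, Matrix.det_mul]
    congr 1
    rw [Matrix.submatrix_map]
    exact ((Int.castRingHom ℚ).map_det _).symm
  have hd2 : (M'.submatrix e'.symm id).det = (b : ℚ) * (M.submatrix e.symm id).det := by
    rw [h2, Matrix.det_mul]
    congr 1
    rw [Matrix.submatrix_map]
    exact ((Int.castRingHom ℚ).map_det _).symm
  by_cases h0 : (M'.submatrix e'.symm id).det = 0
  · rw [hd1, h0, mul_zero]
  · have hkey : ((1 : ℚ) - (b : ℚ) * (a : ℚ)) * (M'.submatrix e'.symm id).det = 0 := by
      have h3 := hd2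
      rw [hd1] at h3
      ring_nf
      ring_nf at h3
      linarith
    have hba : (b : ℚ) * (a : ℚ) = 1 := by
      rcases mul_eq_zero.mp hkey with h | h
      · linarith
      · exact absurd h h0
    have hab : a * b = 1 := by
      have : ((a * b : ℤ) : ℚ) = 1 := by push_cast; linarith [hba]
      exact_mod_cast this
    have habs : |(a : ℚ)| = 1 := by
      rcases Int.isUnit_iff.mp (IsUnit.of_mul_eq_one (a := a) b hab) with h | h <;> simp [h]
    rw [hd1, abs_mul, habs, one_mul]
end

section
/- Let G be a finite connected simple graph with m ≥ 2 vertices and n edges, let S be a vertex of G, and let T be a spanning tree of G. Then the edgewise Kirchhoff matrix M_{G,S,T} is invertible (its determinant is nonzero); consequently, for every right-hand side the corresponding system of n linear equations in the n edge variables has a unique solution. -/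
open SimpleGraph

section Aux
variable {V : Type*} [LinearOrder V]

private lemma ite_chain (a b : Prop) [Decidable a] [Decidable b] (hab : ¬(a ∧ b)) :
    (if a then (1:ℚ) else if b then -1 else 0)
      = (if a then (1:ℚ) else 0) - (if b then 1 else 0) := by
  by_cases ha : a <;> by_cases hb : b <;> simp_all

/-- coefficient of vertex `w` at oriented edge `g` in the incidence matrix -/
private def vcoef {G : SimpleGraph V} (w : V) (g : OrientedEdge G) : ℚ :=
  (if g.1.2 = w then 1 else 0) - (if g.1.1 = w then 1 else 0)

/-- the signed flow of a list of darts along an oriented edge -/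
private def dflow {G : SimpleGraph V} (L : List (V × V)) (g : OrientedEdge G) : ℚ :=
  (L.map (fun p => (if p = (g.1.1, g.1.2) then (1:ℚ) else 0)
    - (if p = (g.1.2, g.1.1) then 1 else 0))).sum

private lemma dlist_sum {α : Type*} [DecidableEq α] (x y : α) :
    ∀ L : List α, L.Nodup →
      (L.map (fun p => (if p = x then (1:ℚ) else 0) - (if p = y then 1 else 0))).sum
        = (if x ∈ L then 1 else 0) - (if y ∈ L then 1 else 0)
  | [], _ => by simp
  | a :: L, h => by
    rw [List.map_cons, List.sum_cons, dlist_sum x y L (List.nodup_cons.mp h).2]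
    have ha : a ∉ L := (List.nodup_cons.mp h).1
    have hsplit : ∀ z : α,
        (if z ∈ a :: L then (1:ℚ) else 0) = (if a = z then 1 else 0) + (if z ∈ L then 1 else 0) := by
      intro z
      by_cases haz : a = z
      · subst haz
        rw [if_pos List.mem_cons_self, if_pos rfl, if_neg ha]
        ring
      · by_cases hz : z ∈ L
        · rw [if_pos (List.mem_cons_of_mem a hz), if_neg haz, if_pos hz]
          ring
        · have hnm : z ∉ a :: L := by
            rw [List.mem_cons]
            rintro (h' | h')
            · exact haz h'.symm
            · exact hz h'
          rw [if_neg hnm, if_neg haz, if_neg hz]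
          ring
    rw [hsplit x, hsplit y]
    ring

private lemma dflow_mem {G : SimpleGraph V} {T : SimpleGraph V} {a b : V} {Pf : T.Walk a b}
    (hPf : Pf.IsPath) (g : OrientedEdge G) :
    dflow (Pf.darts.map Dart.toProd) g
      = (if (g.1.1, g.1.2) ∈ Pf.darts.map Dart.toProd then 1 else 0)
        - (if (g.1.2, g.1.1) ∈ Pf.darts.map Dart.toProd then 1 else 0) := by
  have hd : Pf.darts.Nodup := List.Nodup.of_map Dart.edge hPf.isTrail.edges_nodup
  have hL : (Pf.darts.map Dart.toProd).Nodup := hd.map Dart.toProd_injective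
  unfold dflow
  rw [dlist_sum _ _ _ hL]
  congr

private lemma dflow_eq_zero {G : SimpleGraph V} {T : SimpleGraph V} {a b : V} (Pf : T.Walk a b)
    {g : OrientedEdge G} (hg : ¬ T.Adj g.1.1 g.1.2) :
    dflow (Pf.darts.map Dart.toProd) g = 0 := by
  have h1 : (g.1.1, g.1.2) ∉ Pf.darts.map Dart.toProd := by
    intro hmem
    rw [List.mem_map] at hmem
    obtain ⟨d, _, hdp⟩ := hmem
    have := d.adj
    rw [hdp] at this
    exact hg this
  have h2 : (g.1.2, g.1.1) ∉ Pf.darts.map Dart.toProd := by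
    intro hmem
    rw [List.mem_map] at hmem
    obtain ⟨d, _, hdp⟩ := hmem
    have := d.adj
    rw [hdp] at this
    exact hg this.symm
  refine List.sum_eq_zero fun q hq => ?_
  rw [List.mem_map] at hq
  obtain ⟨p, hp, hpq⟩ := hq
  have hp1 : ¬(p = (g.1.1, g.1.2)) := fun h => h1 (h ▸ hp)
  have hp2 : ¬(p = (g.1.2, g.1.1)) := fun h => h2 (h ▸ hp)
  rw [← hpq, if_neg hp1, if_neg hp2, sub_zero]

private lemma not_both_mem {G : SimpleGraph V} {T : SimpleGraph V} {a b : V} {Pf : T.Walk a b}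
    (hPf : Pf.IsPath) (g : OrientedEdge G) :
    ¬(((g.1.1, g.1.2) ∈ Pf.darts.map Dart.toProd) ∧
      ((g.1.2, g.1.1) ∈ Pf.darts.map Dart.toProd)) := by
  rintro ⟨h1, h2⟩
  rw [List.mem_map] at h1 h2
  obtain ⟨d1, hd1, hd1p⟩ := h1
  obtain ⟨d2, hd2, hd2p⟩ := h2
  have hinj := List.inj_on_of_nodup_map hPf.isTrail.edges_nodup
  have hee : d1.edge = d2.edge := by
    obtain ⟨p1, _⟩ := d1
    obtain ⟨p2, _⟩ := d2
    rw [Dart.edge_mk, Dart.edge_mk]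
    dsimp only at hd1p hd2p
    rw [hd1p, hd2p]
    exact Sym2.eq_swap
  have hdd : d1 = d2 := hinj hd1 hd2 hee
  have hpp := congrArg Dart.toProd hdd
  rw [hd1p, hd2p] at hpp
  rw [Prod.mk.injEq] at hpp
  exact g.2.1.ne hpp.1

end Aux

section Divg
variable {V : Type*} [Fintype V] [LinearOrder V]
variable (G : SimpleGraph V) [DecidableRel G.Adj]

/-- the divergence of an edge function at a vertex -/
private def divg (μ : OrientedEdge G → ℚ) (w : V) : ℚ :=
  ∑ g : OrientedEdge G, vcoef w g * μ g

private lemma divg_dart {x y : V} (h : G.Adj x y) (w : V) :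
    ∑ g : OrientedEdge G, vcoef w g *
      ((if (x, y) = (g.1.1, g.1.2) then (1:ℚ) else 0)
        - (if (x, y) = (g.1.2, g.1.1) then 1 else 0))
    = (if y = w then 1 else 0) - (if x = w then 1 else 0) := by
  rcases h.ne.lt_or_gt with hlt | hlt
  · have hg : ((x, y) : V × V).1 < ((x, y) : V × V).2 ∧ G.Adj ((x, y) : V × V).1 ((x, y) : V × V).2 :=
      ⟨hlt, h⟩
    rw [Finset.sum_eq_single (⟨(x, y), hg⟩ : OrientedEdge G)]
    · have h2 : ¬(((x : V), (y : V)) = (y, x)) := by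
        rintro hp
        rw [Prod.mk.injEq] at hp
        exact hlt.ne (hp.1.symm ▸ hp.2 ▸ rfl)
      rw [if_pos rfl, if_neg h2]
      simp only [vcoef]
      ring
    · intro g _ hne
      have h1 : ¬((x, y) = (g.1.1, g.1.2)) := by
        intro hp
        exact hne (Subtype.ext hp.symm)
      have h2 : ¬((x, y) = (g.1.2, g.1.1)) := by
        intro hp
        rw [Prod.mk.injEq] at hp
        have := g.2.1
        rw [← hp.1, ← hp.2] at this
        exact absurd this hlt.asymm
      simp [h1, h2]
    · simp
  · have hg : ((y, x) : V × V).1 < ((y, x) : V × V).2 ∧ G.Adj ((y, x) : V × V).1 ((y, x) : V × V).2 :=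
      ⟨hlt, h.symm⟩
    rw [Finset.sum_eq_single (⟨(y, x), hg⟩ : OrientedEdge G)]
    · have h1 : ¬(((x : V), (y : V)) = (y, x)) := by
        rintro hp
        rw [Prod.mk.injEq] at hp
        exact hlt.ne (hp.1 ▸ hp.2.symm ▸ rfl)
      rw [if_neg h1, if_pos rfl]
      simp only [vcoef]
      ring
    · intro g _ hne
      have h1 : ¬((x, y) = (g.1.1, g.1.2)) := by
        intro hp
        rw [Prod.mk.injEq] at hp
        have := g.2.1
        rw [← hp.1, ← hp.2] at this
        exact absurd this hlt.asymm
      have h2 : ¬((x, y) = (g.1.2, g.1.1)) := by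
        intro hp
        rw [Prod.mk.injEq] at hp
        apply hne
        apply Subtype.ext
        exact Prod.ext hp.2.symm hp.1.symm
      simp [h1, h2]
    · simp

private lemma divg_flow (T : SimpleGraph V) (hTG : T ≤ G) {a b : V} (P : T.Walk a b) (w : V) :
    ∑ g : OrientedEdge G, vcoef w g * dflow (P.darts.map Dart.toProd) g
      = (if b = w then 1 else 0) - (if a = w then 1 else 0) := by
  induction P with
  | nil => simp [dflow]
  | @cons u c b h' P ih =>
    have hstep : ∀ g : OrientedEdge G,
        dflow (((Walk.cons h' P).darts.map Dart.toProd)) g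
          = ((if (u, c) = (g.1.1, g.1.2) then (1:ℚ) else 0)
              - (if (u, c) = (g.1.2, g.1.1) then 1 else 0))
            + dflow (P.darts.map Dart.toProd) g := by
      intro g
      simp only [Walk.darts_cons, List.map_cons, dflow, List.sum_cons]
    calc ∑ g : OrientedEdge G, vcoef w g * dflow (((Walk.cons h' P).darts.map Dart.toProd)) g
        = ∑ g : OrientedEdge G, (vcoef w g *
            ((if (u, c) = (g.1.1, g.1.2) then (1:ℚ) else 0)
              - (if (u, c) = (g.1.2, g.1.1) then 1 else 0))
          + vcoef w g * dflow (P.darts.map Dart.toProd) g) := by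
          refine Finset.sum_congr rfl fun g _ => ?_
          rw [hstep g, mul_add]
      _ = ((if c = w then 1 else 0) - (if u = w then 1 else 0))
            + ((if b = w then 1 else 0) - (if c = w then 1 else 0)) := by
          rw [Finset.sum_add_distrib, divg_dart G (hTG h') w, ih]
      _ = (if b = w then 1 else 0) - (if u = w then 1 else 0) := by ring

private lemma sum_divg (μ : OrientedEdge G → ℚ) (A : Finset V) :
    ∑ w ∈ A, divg G μ w
      = ∑ g : OrientedEdge G,
          μ g * ((if g.1.2 ∈ A then (1:ℚ) else 0) - (if g.1.1 ∈ A then 1 else 0)) := by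
  unfold divg
  rw [Finset.sum_comm]
  refine Finset.sum_congr rfl fun g _ => ?_
  rw [← Finset.sum_mul, mul_comm]
  congr 1
  unfold vcoef
  rw [Finset.sum_sub_distrib]
  congr 1 <;> simp [Finset.sum_ite_eq]

end Divg

section Cyc
variable {V : Type*} [Fintype V] [LinearOrder V]
variable (G : SimpleGraph V) [DecidableRel G.Adj]

/-- the fundamental "cycle vector" of an oriented edge `f` together with a walk. -/
private def cycfun {G : SimpleGraph V} (f : OrientedEdge G) {T : SimpleGraph V} {a b : V}
    (Pf : T.Walk a b) : OrientedEdge G → ℚ :=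
  fun g => (if g = f then 1 else 0) + dflow (Pf.darts.map Dart.toProd) g

omit [Fintype V] [DecidableRel G.Adj] in
private lemma chain_eq_cyc {T : SimpleGraph V} {f : OrientedEdge G}
    (hf : ¬ T.Adj f.1.1 f.1.2) {a b : V} {Pf : T.Walk a b} (hPf : Pf.IsPath)
    (g : OrientedEdge G) :
    (if g = f then (1:ℚ)
      else if (g.1.1, g.1.2) ∈ Pf.darts.map Dart.toProd then 1
      else if (g.1.2, g.1.1) ∈ Pf.darts.map Dart.toProd then -1 else 0)
    = cycfun f Pf g := by
  have hnb := not_both_mem hPf g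
  by_cases hgf : g = f
  · subst hgf
    rw [if_pos rfl]
    unfold cycfun
    rw [if_pos rfl, dflow_eq_zero Pf hf, add_zero]
  · rw [if_neg hgf]
    unfold cycfun
    rw [if_neg hgf, zero_add, dflow_mem hPf g]
    by_cases h1 : (g.1.1, g.1.2) ∈ Pf.darts.map Dart.toProd
    · have h2 : (g.1.2, g.1.1) ∉ Pf.darts.map Dart.toProd := fun h => hnb ⟨h1, h⟩
      rw [if_pos h1, if_pos h1, if_neg h2]
      norm_num
    · rw [if_neg h1, if_neg h1]
      by_cases h2 : (g.1.2, g.1.1) ∈ Pf.darts.map Dart.toProd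
      · rw [if_pos h2, if_pos h2]
        norm_num
      · rw [if_neg h2, if_neg h2]
        norm_num

private lemma divg_cyc (T : SimpleGraph V) (hTG : T ≤ G) (f : OrientedEdge G)
    (Pf : T.Walk f.1.2 f.1.1) (w : V) :
    divg G (cycfun f Pf) w = 0 := by
  unfold divg cycfun
  have hsplit : ∀ g : OrientedEdge G,
      vcoef w g * ((if g = f then (1:ℚ) else 0) + dflow (Pf.darts.map Dart.toProd) g)
        = (if g = f then vcoef w g else 0) + vcoef w g * dflow (Pf.darts.map Dart.toProd) g := by
    intro g
    by_cases h : g = f <;> simp [h] <;> ring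
  rw [Finset.sum_congr rfl (fun g _ => hsplit g), Finset.sum_add_distrib,
    divg_flow G T hTG Pf w, Finset.sum_ite_eq' Finset.univ f (vcoef w)]
  simp only [Finset.mem_univ, if_true, vcoef]
  ring

omit [Fintype V] [DecidableRel G.Adj] in
private lemma cyc_nontree {T : SimpleGraph V} (f : OrientedEdge G) {a b : V} (Pf : T.Walk a b)
    {g : OrientedEdge G} (hg : ¬ T.Adj g.1.1 g.1.2) :
    cycfun f Pf g = (if g = f then 1 else 0) := by
  unfold cycfun
  rw [dflow_eq_zero Pf hg, add_zero]

end Cyc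

section Kernel
variable {V : Type*} [Fintype V] [LinearOrder V]

private lemma kirchhoff_kernel (G T : SimpleGraph V) [DecidableRel G.Adj] (S : V)
    (hTG : T ≤ G) (hTtree : T.IsTree)
    (M : Matrix (KirchhoffRow G T S) (OrientedEdge G) ℚ)
    (hM : IsEdgewiseKirchhoffMatrix G T S M)
    (ω : OrientedEdge G → ℚ) (hω : M.mulVec ω = 0) : ω = 0 := by
  classical
  have hrow : ∀ r, ∑ g : OrientedEdge G, M r g * ω g = 0 := by
    intro r
    have h := congrFun hω r
    simpa [Matrix.mulVec, dotProduct] using h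
  have hdivne : ∀ w : V, ∀ hw : w ≠ S, divg G ω w = 0 := by
    intro w hw
    rw [← hrow (Sum.inl ⟨w, hw⟩)]
    refine Finset.sum_congr rfl fun g _ => ?_
    rw [hM.1 ⟨w, hw⟩ g]
    congr 1
    rw [ite_chain _ _ (fun hc => g.2.1.ne (hc.2.trans hc.1.symm))]
    rfl
  have hdiv : ∀ w : V, divg G ω w = 0 := by
    have htot : ∑ w : V, divg G ω w = 0 := by
      rw [sum_divg]
      simp
    intro w
    by_cases hw : w = S
    · subst hw
      have h2 : ∑ v ∈ Finset.univ.erase w, divg G ω v = 0 :=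
        Finset.sum_eq_zero fun v hv => hdivne v (Finset.ne_of_mem_erase hv)
      have h3 := Finset.add_sum_erase Finset.univ (divg G ω) (Finset.mem_univ w)
      rw [h2, add_zero, htot] at h3
      exact h3
    · exact hdivne w hw
  have hpath : ∀ f : {e : OrientedEdge G // ¬ T.Adj e.1.1 e.1.2},
      ∃ P : T.Walk f.1.1.2 f.1.1.1, P.IsPath := by
    intro f
    obtain ⟨p⟩ := hTtree.isConnected.preconnected f.1.1.2 f.1.1.1
    exact ⟨p.toPath.1, p.toPath.2⟩
  choose P hP using hpath
  have horth : ∀ f, ∑ g : OrientedEdge G, cycfun f.1 (P f) g * ω g = 0 := by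
    intro f
    rw [← hrow (Sum.inr f)]
    refine Finset.sum_congr rfl fun g _ => ?_
    rw [hM.2 f g (P f) (hP f), chain_eq_cyc G f.2 (hP f) g]
  set μ : OrientedEdge G → ℚ :=
    fun g => ω g - ∑ f, ω f.1 * cycfun f.1 (P f) g with hμdef
  have hdivμ : ∀ w, divg G μ w = 0 := by
    intro w
    have hexp : ∀ g : OrientedEdge G, vcoef w g * μ g
        = vcoef w g * ω g - ∑ f, ω f.1 * (vcoef w g * cycfun f.1 (P f) g) := by
      intro g
      simp only [hμdef]
      rw [mul_sub, Finset.mul_sum]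
      congr 1
      exact Finset.sum_congr rfl fun f _ => by ring
    calc divg G μ w = ∑ g : OrientedEdge G,
          (vcoef w g * ω g - ∑ f, ω f.1 * (vcoef w g * cycfun f.1 (P f) g)) :=
        Finset.sum_congr rfl fun g _ => hexp g
      _ = divg G ω w - ∑ f, ω f.1 * divg G (cycfun f.1 (P f)) w := by
          rw [Finset.sum_sub_distrib]
          congr 1
          rw [Finset.sum_comm]
          exact Finset.sum_congr rfl fun f _ => by rw [← Finset.mul_sum]; rfl
      _ = 0 := by
          rw [hdiv w,
            Finset.sum_eq_zero fun f _ => by rw [divg_cyc G T hTG f.1 (P f) w, mul_zero]]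
          ring
  have hμnt : ∀ g : OrientedEdge G, ¬ T.Adj g.1.1 g.1.2 → μ g = 0 := by
    intro g hg
    simp only [hμdef]
    have hterm : ∀ f : {e : OrientedEdge G // ¬ T.Adj e.1.1 e.1.2},
        ω f.1 * cycfun f.1 (P f) g = if f = ⟨g, hg⟩ then ω g else 0 := by
      intro f
      rw [cyc_nontree G f.1 (P f) hg]
      by_cases hfg : f = ⟨g, hg⟩
      · subst hfg
        simp
      · have hgf : ¬ (g = f.1) := fun h => hfg (Subtype.ext h.symm)
        rw [if_neg hgf, mul_zero, if_neg hfg]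
    rw [Finset.sum_congr rfl fun f _ => hterm f,
      Finset.sum_ite_eq' Finset.univ (⟨g, hg⟩ : {e : OrientedEdge G // ¬ T.Adj e.1.1 e.1.2})
        (fun _ => ω g)]
    simp
  have hμtree : ∀ g : OrientedEdge G, T.Adj g.1.1 g.1.2 → μ g = 0 := by
    intro g hg
    set A : Finset V :=
      Finset.univ.filter (fun w => (T.deleteEdges {s(g.1.1, g.1.2)}).Reachable w g.1.2) with hA
    have hmemA : ∀ w, w ∈ A ↔ (T.deleteEdges {s(g.1.1, g.1.2)}).Reachable w g.1.2 := by
      intro w; simp [hA]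
    have hv : g.1.2 ∈ A := (hmemA _).mpr (Reachable.refl _)
    have hu : g.1.1 ∉ A := by
      rw [hmemA]
      intro hr
      have hb := (isAcyclic_iff_forall_edge_isBridge.mp hTtree.IsAcyclic)
        (T.mem_edgeSet.mpr hg)
      rw [isBridge_iff] at hb
      exact hb hr
    have hcut := sum_divg G μ A
    rw [Finset.sum_eq_zero (fun w _ => hdivμ w)] at hcut
    have hmain : ∑ g' : OrientedEdge G,
        μ g' * ((if g'.1.2 ∈ A then (1:ℚ) else 0) - (if g'.1.1 ∈ A then 1 else 0)) = μ g := by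
      rw [Finset.sum_eq_single g]
      · rw [if_pos hv, if_neg hu]
        ring
      · intro g' _ hne
        by_cases ht : T.Adj g'.1.1 g'.1.2
        · have hadj : (T.deleteEdges {s(g.1.1, g.1.2)}).Adj g'.1.1 g'.1.2 := by
            rw [deleteEdges_adj]
            refine ⟨ht, ?_⟩
            simp only [Set.mem_singleton_iff]
            intro hs
            rw [Sym2.eq_iff] at hs
            rcases hs with ⟨h1, h2⟩ | ⟨h1, h2⟩
            · exact hne (Subtype.ext (Prod.ext h1 h2))
            · have hlt := g'.2.1
              rw [h1, h2] at hlt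
              exact absurd hlt g.2.1.asymm
          have hiff : (g'.1.2 ∈ A) ↔ (g'.1.1 ∈ A) := by
            rw [hmemA, hmemA]
            exact ⟨fun h => hadj.reachable.trans h, fun h => hadj.symm.reachable.trans h⟩
          by_cases hmem : g'.1.1 ∈ A
          · rw [if_pos hmem, if_pos (hiff.mpr hmem)]
            ring
          · rw [if_neg hmem, if_neg (fun h => hmem (hiff.mp h))]
            ring
        · rw [hμnt g' ht]
          ring
      · intro hg'
        exact absurd (Finset.mem_univ g) hg'
    rw [hmain] at hcut
    exact hcut.symm
  have hμ0 : ∀ g, μ g = 0 := by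
    intro g
    by_cases h : T.Adj g.1.1 g.1.2
    · exact hμtree g h
    · exact hμnt g h
  have hrep : ∀ g, ω g = ∑ f, ω f.1 * cycfun f.1 (P f) g := by
    intro g
    have h := hμ0 g
    simp only [hμdef] at h
    linarith
  have hsq : ∑ g : OrientedEdge G, ω g * ω g = 0 := by
    calc ∑ g : OrientedEdge G, ω g * ω g
        = ∑ g : OrientedEdge G, ∑ f, (ω f.1 * (cycfun f.1 (P f) g * ω g)) := by
          refine Finset.sum_congr rfl fun g _ => ?_
          rw [show (ω g * ω g) = (∑ f, ω f.1 * cycfun f.1 (P f) g) * ω g from by rw [← hrep g],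
            Finset.sum_mul]
          exact Finset.sum_congr rfl fun f _ => by ring
      _ = ∑ f, ω f.1 * ∑ g : OrientedEdge G, cycfun f.1 (P f) g * ω g := by
          rw [Finset.sum_comm]
          exact Finset.sum_congr rfl fun f _ => by rw [Finset.mul_sum]
      _ = 0 := Finset.sum_eq_zero fun f _ => by rw [horth f, mul_zero]
  funext g
  have hz := (Finset.sum_eq_zero_iff_of_nonneg
    (fun g' _ => mul_self_nonneg (ω g'))).mp hsq g (Finset.mem_univ g)
  simpa using mul_self_eq_zero.mp hz

end Kernel

section Card
variable {V : Type*} [Fintype V] [LinearOrder V]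

private lemma card_row_eq (G T : SimpleGraph V) [DecidableRel G.Adj] (S : V)
    (hTG : T ≤ G) (hTtree : T.IsTree) :
    Nonempty (KirchhoffRow G T S ≃ OrientedEdge G) := by
  classical
  have hbij : Function.Bijective
      (fun e : {e : OrientedEdge G // T.Adj e.1.1 e.1.2} =>
        (⟨s(e.1.1.1, e.1.1.2), T.mem_edgeSet.mpr e.2⟩ : T.edgeSet)) := by
    constructor
    · intro e1 e2 h
      have h' : s(e1.1.1.1, e1.1.1.2) = s(e2.1.1.1, e2.1.1.2) := congrArg Subtype.val h
      rw [Sym2.eq_iff] at h'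
      apply Subtype.ext
      apply Subtype.ext
      rcases h' with ⟨h1, h2⟩ | ⟨h1, h2⟩
      · exact Prod.ext h1 h2
      · exfalso
        have hlt := e1.1.2.1
        rw [h1, h2] at hlt
        exact absurd hlt e2.1.2.1.asymm
    · rintro ⟨e, he⟩
      induction e using Sym2.ind with
      | _ a b =>
        have hab : T.Adj a b := T.mem_edgeSet.mp he
        rcases hab.ne.lt_or_gt with h | h
        · exact ⟨⟨⟨(a, b), ⟨h, hTG hab⟩⟩, hab⟩, rfl⟩
        · refine ⟨⟨⟨(b, a), ⟨h, hTG hab.symm⟩⟩, hab.symm⟩, ?_⟩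
          apply Subtype.ext
          exact Sym2.eq_swap
  have hcard1 : Fintype.card {e : OrientedEdge G // T.Adj e.1.1 e.1.2}
      = T.edgeFinset.card := by
    rw [SimpleGraph.edgeFinset_card]
    exact Fintype.card_of_bijective hbij
  have hcard2 : T.edgeFinset.card + 1 = Fintype.card V := hTtree.card_edgeFinset
  have hle : Fintype.card {e : OrientedEdge G // T.Adj e.1.1 e.1.2}
      ≤ Fintype.card (OrientedEdge G) := Fintype.card_subtype_le _
  have hcompl : Fintype.card {e : OrientedEdge G // ¬ T.Adj e.1.1 e.1.2}
      = Fintype.card (OrientedEdge G)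
        - Fintype.card {e : OrientedEdge G // T.Adj e.1.1 e.1.2} :=
    Fintype.card_subtype_compl _
  have hS : Fintype.card {w : V // w ≠ S} = Fintype.card V - 1 := by
    rw [Fintype.card_subtype_compl, Fintype.card_subtype_eq]
  apply Nonempty.intro
  apply Fintype.equivOfCardEq
  rw [Fintype.card_sum, hS, hcompl, hcard1]
  omega

end Card

/-- **Invertibility of the edgewise Kirchhoff matrix.**
For a finite connected simple graph `G` with at least two vertices, a pole `S` and a
spanning tree `T`, the edgewise Kirchhoff matrix `M_{G,S,T}` has nonzero determinant;
consequently, for every right-hand side the corresponding system of `n` linear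
equations in the `n` edge variables has a unique solution. -/
theorem edgewiseKirchhoff_invertible
    {V : Type*} [Fintype V] [LinearOrder V]
    (G T : SimpleGraph V) [DecidableRel G.Adj] (S : V)
    (hm : 2 ≤ Fintype.card V) (hG : G.Connected)
    (hTsub : T ≤ G) (hTtree : T.IsTree)
    (M : Matrix (KirchhoffRow G T S) (OrientedEdge G) ℚ)
    (hM : IsEdgewiseKirchhoffMatrix G T S M) :
    (∀ e : KirchhoffRow G T S ≃ OrientedEdge G, (M.submatrix e.symm id).det ≠ 0) ∧
      ∀ c : KirchhoffRow G T S → ℚ, ∃! ω : OrientedEdge G → ℚ, M.mulVec ω = c := by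
  classical
  have hker := kirchhoff_kernel G T S hTsub hTtree M hM
  have hdet : ∀ e : KirchhoffRow G T S ≃ OrientedEdge G, (M.submatrix e.symm id).det ≠ 0 := by
    intro e hdet0
    obtain ⟨v, hv0, hv⟩ := Matrix.exists_mulVec_eq_zero_iff.mpr hdet0
    apply hv0
    apply hker
    funext r
    have h := congrFun hv (e r)
    simpa [Matrix.mulVec, dotProduct, Matrix.submatrix_apply] using h
  refine ⟨hdet, fun c => ?_⟩
  obtain ⟨e₁⟩ := card_row_eq G T S hTsub hTtree
  set N : Matrix (OrientedEdge G) (OrientedEdge G) ℚ := M.submatrix e₁.symm id with hN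
  have hNdet : N.det ≠ 0 := hdet e₁
  have hNunit : IsUnit N.det := isUnit_iff_ne_zero.mpr hNdet
  set ω₀ : OrientedEdge G → ℚ := N⁻¹.mulVec (fun i => c (e₁.symm i)) with hω₀
  have hsol : M.mulVec ω₀ = c := by
    funext r
    have h1 : N.mulVec ω₀ = fun i => c (e₁.symm i) := by
      rw [hω₀, Matrix.mulVec_mulVec, Matrix.mul_nonsing_inv _ hNunit, Matrix.one_mulVec]
    have h2 := congrFun h1 (e₁ r)
    simp only [Equiv.symm_apply_apply] at h2
    have h3 : N.mulVec ω₀ (e₁ r) = M.mulVec ω₀ r := by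
      simp [hN, Matrix.mulVec, dotProduct, Matrix.submatrix_apply]
    rw [← h3, h2]
  refine ⟨ω₀, hsol, ?_⟩
  intro y hy
  have hz : M.mulVec (y - ω₀) = 0 := by
    rw [Matrix.mulVec_sub, hy, hsol, sub_self]
  exact sub_eq_zero.mp (hker _ hz)
end
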